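/- arXiv:2601.08171 — 2 statements merged into one kernel-verified Lean document; each statement's English description precedes it below -/
import Mathlib

section
/- There exist constants C and N such that for every n ≥ N the following holds under the Setup with t = 2, together with the Apex assumption: | ∑_{F ∈ M_u^c ∖ ({F_0} ∪ N^d(F_0))} f(∂F) − (n²/2 − 7n/2) | ≤ C. -/
open Finset Matrix

/-- A simplicial complex on vertex set `{1,…,n}` (modelled as `Fin n`):
a collection of nonempty subsets closed under taking nonempty subsets
and containing every singleton. -/
structure SimplicialComplex (n : ℕ) where
  faces : Finset (Finset (Fin n))
  nonempty_mem : ∀ F ∈ faces, F.Nonempty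
  down_closed : ∀ F ∈ faces, ∀ G : Finset (Fin n), G ⊆ F → G.Nonempty → G ∈ faces
  singleton_mem : ∀ x : Fin n, {x} ∈ faces

namespace SimplicialComplex

variable {n : ℕ}

/-- `S_i(K)`: the `i`-faces, i.e. faces of cardinality `i+1`. -/
def iFaces (K : SimplicialComplex n) (i : ℕ) : Finset (Finset (Fin n)) :=
  K.faces.filter (fun F => F.card = i + 1)

/-- `K` is pure `r`-dimensional: every maximal face has cardinality `r+1`. -/
def IsPure (K : SimplicialComplex n) (r : ℕ) : Prop :=
  ∀ F ∈ K.faces, (∀ G ∈ K.faces, F ⊆ G → F = G) → F.card = r + 1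

/-- The signless incidence matrix `B_{i+1}(K)`, with rows indexed by `S_i(K)` and
columns indexed by `S_{i+1}(K)`; entry is `1` if the row face is contained in the
column face, `0` otherwise. -/
def signlessInc (K : SimplicialComplex n) (i : ℕ) :
    Matrix ↥(K.iFaces i) ↥(K.iFaces (i+1)) ℝ :=
  Matrix.of fun F Fb => if (F : Finset (Fin n)) ⊆ (Fb : Finset (Fin n)) then 1 else 0

/-- The `i`-th up signless Laplacian `Q_i^{up}(K) = B_{i+1} B_{i+1}ᵀ`. -/
def Qup (K : SimplicialComplex n) (i : ℕ) :
    Matrix ↥(K.iFaces i) ↥(K.iFaces i) ℝ :=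
  K.signlessInc i * (K.signlessInc i)ᵀ

/-- The signless Laplacian spectral radius `q_i(K)`: the largest eigenvalue of
`Q_i^{up}(K)`. -/
noncomputable def specRad (K : SimplicialComplex n) (i : ℕ) : ℝ :=
  sSup {μ : ℝ | ∃ v : ↥(K.iFaces i) → ℝ, v ≠ 0 ∧ (K.Qup i).mulVec v = μ • v}

/-- The signed boundary matrix `∂_{i+1}(K)`, with rows indexed by `S_i(K)` and columns
indexed by `S_{i+1}(K)`: the entry in position `(F ∖ {v_j}, F)` is `(-1)^j`, where the
vertices of `F` are listed in increasing order `v_0 < ⋯ < v_{i+1}`. -/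
def signedBoundary (K : SimplicialComplex n) (i : ℕ) :
    Matrix ↥(K.iFaces i) ↥(K.iFaces (i+1)) ℝ :=
  Matrix.of fun G Fb =>
    if (G : Finset (Fin n)) ⊆ (Fb : Finset (Fin n)) then
      ∑ v ∈ (Fb : Finset (Fin n)) \ (G : Finset (Fin n)),
        (-1 : ℝ) ^ (((Fb : Finset (Fin n)).filter (fun w => w < v)).card)
    else 0

/-- The rank of `∂_i(K)` (with `∂_0 := 0`). -/
noncomputable def boundaryRank (K : SimplicialComplex n) : ℕ → ℕ
  | 0 => 0
  | (i+1) => (K.signedBoundary i).rank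

/-- The `i`-th Betti number (with real coefficients):
`β_i(K) = nullity(∂_i(K)) − rank(∂_{i+1}(K))`. -/
noncomputable def betti (K : SimplicialComplex n) (i : ℕ) : ℕ :=
  ((K.iFaces i).card - K.boundaryRank i) - K.boundaryRank (i+1)

/-- For a vector `f` indexed by `S_i(K)` and a set `Fb`, the quantity
`f(∂Fb) = ∑_{F ∈ S_i(K), F ⊆ Fb} f(F)`. -/
noncomputable def bSum (K : SimplicialComplex n) (i : ℕ) (f : ↥(K.iFaces i) → ℝ)
    (Fb : Finset (Fin n)) : ℝ :=
  ∑ F : ↥(K.iFaces i), if (F : Finset (Fin n)) ⊆ Fb then f F else 0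

/-- `N^d(F)`: the set of down neighbors of the 2-face `F`, i.e. the 2-faces distinct
from `F` sharing a 1-face with `F`. -/
def downNbrs (K : SimplicialComplex n) (F : Finset (Fin n)) : Finset (Finset (Fin n)) :=
  (K.iFaces 2).filter (fun F' => F' ≠ F ∧ (F' ∩ F).card = 2)

/-- `N^d(F,x) = { {x} ∪ G ∈ S_2(K) : G ⊂ F, |G| = 2 }`. -/
def downNbrsAt (K : SimplicialComplex n) (F : Finset (Fin n)) (x : Fin n) :
    Finset (Finset (Fin n)) :=
  (K.iFaces 2).filter (fun F' => ∃ G ⊆ F, G.card = 2 ∧ F' = insert x G)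

end SimplicialComplex

open SimplicialComplex

/-- `K(n,r,t)`: pure `r`-dimensional complexes on `{1,…,n}` with `β_r = t`. -/
def Kfam (n r t : ℕ) : Set (SimplicialComplex n) :=
  {K | K.IsPure r ∧ K.betti r = t}

namespace SimplicialComplex

variable {n : ℕ}

/-- `A = {1,…,n} ∖ F₀`. -/
def Aset (F0 : Finset (Fin n)) : Finset (Fin n) := Finset.univ \ F0

/-- `A_i = { x ∈ A : |N^d(F₀,x)| = i }`. -/
def Ai (K : SimplicialComplex n) (F0 : Finset (Fin n)) (i : ℕ) : Finset (Fin n) :=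
  (Aset F0).filter (fun x => (K.downNbrsAt F0 x).card = i)

/-- `A_{≤i} = { x ∈ A : |N^d(F₀,x)| ≤ i }`. -/
def Ale (K : SimplicialComplex n) (F0 : Finset (Fin n)) (i : ℕ) : Finset (Fin n) :=
  (Aset F0).filter (fun x => (K.downNbrsAt F0 x).card ≤ i)

/-- `A_2^x = { y ∈ A_2 : (F₀ ∖ {x}) ∪ {y} ∉ S_2(K) }`. -/
def A2x (K : SimplicialComplex n) (F0 : Finset (Fin n)) (x : Fin n) : Finset (Fin n) :=
  (K.Ai F0 2).filter (fun y => insert y (F0.erase x) ∉ K.iFaces 2)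

/-- `M_u`: the set of 2-faces of `K` not containing `u`. -/
def Mu (K : SimplicialComplex n) (u : Fin n) : Finset (Finset (Fin n)) :=
  (K.iFaces 2).filter (fun F => u ∉ F)

/-- `M_u(vw)`: members of `M_u` containing `{v,w}`. -/
def MuVW (K : SimplicialComplex n) (u v w : Fin n) : Finset (Finset (Fin n)) :=
  (K.Mu u).filter (fun F => v ∈ F ∧ w ∈ F)

/-- `M_u^c = S_2(K) ∖ M_u`. -/
def Muc (K : SimplicialComplex n) (u : Fin n) : Finset (Finset (Fin n)) :=
  K.iFaces 2 \ K.Mu u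

/-- `d_{M_u}(G) = |{ F ∈ M_u : G ⊂ F }|`. -/
def dMu (K : SimplicialComplex n) (u : Fin n) (G : Finset (Fin n)) : ℕ :=
  ((K.Mu u).filter (fun F => G ⊆ F)).card

/-- Apex assumption: every 3-subset of the vertex set containing `u` is a 2-face of `K`. -/
def Apex (K : SimplicialComplex n) (u : Fin n) : Prop :=
  ∀ F : Finset (Fin n), F.card = 3 → u ∈ F → F ∈ K.faces

/-- The Setup of the paper: `K ∈ K(n,2,t)` maximizes the signless Laplacian spectral
radius; `f` is an entrywise nonnegative eigenvector of `Q_1^{up}(K)` for the eigenvalue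
`q₁(K)`, normalized so that `max { f(∂F) : F ∈ S_2(K) } = 1`, and `F₀ = {u,v,w}`
is a 2-face attaining this maximum, with the labelling `|A_2^u| ≥ |A_2^v| ≥ |A_2^w|`. -/
def Setup (n t : ℕ) (K : SimplicialComplex n) (f : ↥(K.iFaces 1) → ℝ)
    (u v w : Fin n) : Prop :=
  K ∈ Kfam n 2 t ∧
  (∀ L ∈ Kfam n 2 t, L.specRad 1 ≤ K.specRad 1) ∧
  f ≠ 0 ∧ (∀ e, 0 ≤ f e) ∧
  (K.Qup 1).mulVec f = (K.specRad 1) • f ∧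
  ({u,v,w} : Finset (Fin n)) ∈ K.iFaces 2 ∧
  (∀ F ∈ K.iFaces 2, K.bSum 1 f F ≤ 1) ∧
  K.bSum 1 f {u,v,w} = 1 ∧
  (K.A2x {u,v,w} v).card ≤ (K.A2x {u,v,w} u).card ∧
  (K.A2x {u,v,w} w).card ≤ (K.A2x {u,v,w} v).card

/-- A face of the tented complex `T_n^r` with apex `u`: a nonempty subset of
`{u} ∪ A` for some `r`-subset `A` of the vertices other than `u`. -/
def TentFace (r : ℕ) (u : Fin n) (G : Finset (Fin n)) : Prop :=
  G.Nonempty ∧ ∃ A : Finset (Fin n), u ∉ A ∧ A.card = r ∧ G ⊆ insert u A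

end SimplicialComplex


open Finset Matrix

namespace Stmt16Aux
open SimplicialComplex

variable {n : ℕ}

lemma mem_iFaces_iff {K : SimplicialComplex n} {i : ℕ} {F : Finset (Fin n)} :
    F ∈ K.iFaces i ↔ F ∈ K.faces ∧ F.card = i + 1 := by
  simp [SimplicialComplex.iFaces, Finset.mem_filter]

lemma edge_mem {K : SimplicialComplex n} {u : Fin n} (hA : K.Apex u) (hn : 3 ≤ n)
    {p : Finset (Fin n)} (hp : p.card = 2) : p ∈ K.iFaces 1 := by
  by_cases hu : u ∈ p
  · -- enlarge p by one fresh vertex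
    have hne : (pᶜ : Finset (Fin n)).Nonempty := by
      rw [← Finset.card_pos, Finset.card_compl, hp]
      simp only [Fintype.card_fin]; omega
    obtain ⟨z, hz⟩ := hne
    have hzp : z ∉ p := by simpa using hz
    have h3 : (insert z p).card = 3 := by
      rw [Finset.card_insert_of_notMem hzp, hp]
    have hface : insert z p ∈ K.faces := hA _ h3 (Finset.mem_insert_of_mem hu)
    exact mem_iFaces_iff.2 ⟨K.down_closed _ hface p (Finset.subset_insert _ _)
      (Finset.card_pos.1 (by omega)), hp⟩
  · have h3 : (insert u p).card = 3 := by
      rw [Finset.card_insert_of_notMem hu, hp]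
    have hface : insert u p ∈ K.faces := hA _ h3 (Finset.mem_insert_self u p)
    exact mem_iFaces_iff.2 ⟨K.down_closed _ hface p (Finset.subset_insert _ _)
      (Finset.card_pos.1 (by omega)), hp⟩

lemma cone_mem {K : SimplicialComplex n} {u : Fin n} (hA : K.Apex u)
    {F : Finset (Fin n)} (hu : u ∈ F) (h3 : F.card = 3) : F ∈ K.iFaces 2 :=
  mem_iFaces_iff.2 ⟨hA F h3 hu, h3⟩

lemma iFaces3_empty {K : SimplicialComplex n} (hP : K.IsPure 2) : K.iFaces 3 = ∅ := by
  by_contra h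
  obtain ⟨F, hF⟩ := Finset.nonempty_iff_ne_empty.2 h
  rw [mem_iFaces_iff] at hF
  have hne : (K.faces.filter (fun G => F ⊆ G)).Nonempty :=
    ⟨F, Finset.mem_filter.2 ⟨hF.1, Finset.Subset.refl _⟩⟩
  obtain ⟨G, hGM⟩ := Finset.exists_maximal hne
  have hG : G ∈ K.faces.filter (fun G => F ⊆ G) := hGM.1
  have hGmax : ∀ x ∈ K.faces.filter (fun G => F ⊆ G), ¬ G < x :=
    fun x hx hlt => lt_irrefl G (lt_of_lt_of_le hlt (hGM.2 hx hlt.le))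
  rw [Finset.mem_filter] at hG
  have hmax : ∀ G' ∈ K.faces, G ⊆ G' → G = G' := by
    intro G' hG' hsub
    by_contra hne'
    exact hGmax G' (Finset.mem_filter.2 ⟨hG', hG.2.trans hsub⟩)
      (lt_of_le_of_ne hsub hne')
  have := hP G hG.1 hmax
  have := Finset.card_le_card hG.2
  omega

lemma rank3_zero {K : SimplicialComplex n} (hP : K.IsPure 2) : K.boundaryRank 3 = 0 := by
  have h := iFaces3_empty hP
  have : (K.signedBoundary 2).rank ≤ Fintype.card ↥(K.iFaces 3) :=
    Matrix.rank_le_card_width _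
  simp only [Fintype.card_coe, h, Finset.card_empty] at this
  simpa [SimplicialComplex.boundaryRank] using this

lemma Muc_eq (K : SimplicialComplex n) (u : Fin n) :
    K.Muc u = (K.iFaces 2).filter (fun F => u ∈ F) := by
  ext F
  simp only [SimplicialComplex.Muc, SimplicialComplex.Mu, Finset.mem_sdiff,
    Finset.mem_filter]
  tauto

lemma triple_decomp {F : Finset (Fin n)} {u : Fin n} (hu : u ∈ F) (h3 : F.card = 3) :
    ∃ a b : Fin n, a ≠ b ∧ a ≠ u ∧ b ≠ u ∧ F = insert u (insert a {b}) := by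
  have hc : (F.erase u).card = 2 := by rw [Finset.card_erase_of_mem hu, h3]
  obtain ⟨a, b, hab, hE⟩ := Finset.card_eq_two.1 hc
  have ha : a ∈ F.erase u := hE ▸ Finset.mem_insert_self a _
  have hb : b ∈ F.erase u := by rw [hE]; simp
  refine ⟨a, b, hab, Finset.ne_of_mem_erase ha, Finset.ne_of_mem_erase hb, ?_⟩
  rw [← hE, Finset.insert_erase hu]

lemma card_triple {u a b : Fin n} (hab : a ≠ b) (hau : a ≠ u) (hbu : b ≠ u) :
    (insert u (insert a {b}) : Finset (Fin n)).card = 3 := by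
  rw [Finset.card_insert_of_notMem (by simp only [Finset.mem_insert, Finset.mem_singleton, not_or]; exact ⟨Ne.symm hau, Ne.symm hbu⟩),
    Finset.card_insert_of_notMem (by simp [hab]), Finset.card_singleton]

lemma mem_downNbrs_iff {K : SimplicialComplex n} {F F' : Finset (Fin n)} :
    F' ∈ K.downNbrs F ↔ F' ∈ K.iFaces 2 ∧ F' ≠ F ∧ (F' ∩ F).card = 2 := by
  simp [SimplicialComplex.downNbrs]

lemma downNbrs_symm {K : SimplicialComplex n} {F F' : Finset (Fin n)}
    (hF : F ∈ K.iFaces 2) (h : F' ∈ K.downNbrs F) : F ∈ K.downNbrs F' := by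
  rw [mem_downNbrs_iff] at h ⊢
  exact ⟨hF, Ne.symm h.2.1, by rw [Finset.inter_comm]; exact h.2.2⟩

lemma cone_card {K : SimplicialComplex n} {u : Fin n} (hA : K.Apex u) :
    ((K.iFaces 2).filter (fun F => u ∈ F)).card = (n - 1).choose 2 := by
  have h : ((Finset.univ.erase u : Finset (Fin n)).powersetCard 2).card = (n-1).choose 2 := by
    rw [Finset.card_powersetCard, Finset.card_erase_of_mem (Finset.mem_univ u),
      Finset.card_univ, Fintype.card_fin]
  rw [← h]
  refine Finset.card_bij' (i := fun F _ => F.erase u) (j := fun p _ => insert u p)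
    ?_ ?_ ?_ ?_
  · intro F hF
    rw [Finset.mem_filter, mem_iFaces_iff] at hF
    rw [Finset.mem_powersetCard]
    exact ⟨fun z hz => Finset.mem_erase.2 ⟨(Finset.mem_erase.1 hz).1,
        Finset.mem_univ z⟩,
      by rw [Finset.card_erase_of_mem hF.2, hF.1.2]⟩
  · intro p hp
    rw [Finset.mem_powersetCard] at hp
    have hup : u ∉ p := fun h => (Finset.mem_erase.1 (hp.1 h)).1 rfl
    refine Finset.mem_filter.2 ⟨cone_mem hA (Finset.mem_insert_self _ _) ?_,
      Finset.mem_insert_self _ _⟩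
    rw [Finset.card_insert_of_notMem hup, hp.2]
  · intro F hF
    exact Finset.insert_erase (Finset.mem_filter.1 hF).2
  · intro p hp
    rw [Finset.mem_powersetCard] at hp
    exact Finset.erase_insert (fun h => (Finset.mem_erase.1 (hp.1 h)).1 rfl)

lemma mem_triple {z u a b : Fin n} :
    z ∈ (insert u (insert a {b}) : Finset (Fin n)) ↔ z = u ∨ z = a ∨ z = b := by
  simp [Finset.mem_insert]

lemma X_card {K : SimplicialComplex n} {u a b : Fin n} (hA : K.Apex u)
    (hab : a ≠ b) (hau : a ≠ u) (hbu : b ≠ u) :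
    ((K.downNbrs (insert u (insert a {b}))).filter (fun F' => u ∈ F')).card
      = 2 * (n - 3) := by
  set F : Finset (Fin n) := insert u (insert a {b}) with hFdef
  have hcardF : F.card = 3 := card_triple hab hau hbu
  have huF : u ∈ F := Finset.mem_insert_self _ _
  have haF : a ∈ F := mem_triple.2 (Or.inr (Or.inl rfl))
  have hbF : b ∈ F := mem_triple.2 (Or.inr (Or.inr rfl))
  have hP : ((insert a {b} : Finset (Fin n)) ×ˢ (Finset.univ \ F)).card = 2 * (n - 3) := by
    rw [Finset.card_product, Finset.card_sdiff_of_subset (Finset.subset_univ F), hcardF,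
      Finset.card_univ, Fintype.card_fin]
    congr 1
    rw [Finset.card_insert_of_notMem (by simp [hab]), Finset.card_singleton]
  rw [← hP]
  symm
  apply Finset.card_nbij (i := fun p => insert u (insert p.1 {p.2}))
  · rintro ⟨c, x⟩ hp
    rw [Finset.mem_coe, Finset.mem_product, Finset.mem_sdiff] at hp
    have hcF : c ∈ F := Finset.mem_insert_of_mem hp.1
    have hxF : x ∉ F := hp.2.2
    have hxu : x ≠ u := fun h => hxF (h ▸ huF)
    have hxc : x ≠ c := fun h => hxF (h ▸ hcF)
    have hcu : c ≠ u := by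
      rcases Finset.mem_insert.1 hp.1 with h | h
      · have h' : c = a := h
        rw [h']; exact hau
      · have h' : c = b := Finset.mem_singleton.1 h
        rw [h']; exact hbu
    refine Finset.mem_filter.2 ⟨mem_downNbrs_iff.2 ⟨cone_mem hA
      (Finset.mem_insert_self _ _) (card_triple (Ne.symm hxc) hcu hxu), ?_, ?_⟩,
      Finset.mem_insert_self _ _⟩
    · intro h
      exact hxF (h ▸ mem_triple.2 (Or.inr (Or.inr rfl)))
    · have : (insert u (insert c {x}) : Finset (Fin n)) ∩ F = insert u {c} := by
        ext z
        simp only [Finset.mem_inter, mem_triple, Finset.mem_insert, Finset.mem_singleton]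
        constructor
        · rintro ⟨h1 | h1 | h1, h2⟩
          · exact Or.inl h1
          · exact Or.inr h1
          · subst h1; exact absurd h2 hxF
        · rintro (h | h)
          · subst h; exact ⟨Or.inl rfl, huF⟩
          · subst h; exact ⟨Or.inr (Or.inl rfl), hcF⟩
      rw [this, Finset.card_insert_of_notMem (by simp [Ne.symm hcu]),
        Finset.card_singleton]
  · rintro ⟨c, x⟩ hp ⟨c', x'⟩ hp' heq
    simp only [Finset.coe_product, Set.mem_prod, Finset.mem_coe, Finset.mem_sdiff,
      Finset.mem_univ, true_and] at hp hp'
    have hc'F : c' ∈ F := Finset.mem_insert_of_mem hp'.1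
    have hcF : c ∈ F := Finset.mem_insert_of_mem hp.1
    have hcu : c ≠ u := by
      rcases Finset.mem_insert.1 hp.1 with h | h
      · have h' : c = a := h
        rw [h']; exact hau
      · have h' : c = b := Finset.mem_singleton.1 h
        rw [h']; exact hbu
    have hxu : x ≠ u := fun h => hp.2 (h ▸ huF)
    have heq' : (insert u (insert c {x}) : Finset (Fin n)) = insert u (insert c' {x'}) := heq
    have hcc' : c = c' := by
      have : c ∈ (insert u (insert c' {x'}) : Finset (Fin n)) := heq' ▸
        mem_triple.2 (Or.inr (Or.inl rfl))
      rcases mem_triple.1 this with h | h | h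
      · exact absurd h hcu
      · exact h
      · exact absurd (h ▸ hcF) hp'.2
    have hxx' : x = x' := by
      have : x ∈ (insert u (insert c' {x'}) : Finset (Fin n)) := heq' ▸
        mem_triple.2 (Or.inr (Or.inr rfl))
      rcases mem_triple.1 this with h | h | h
      · exact absurd h hxu
      · exact absurd ((h.trans hcc'.symm) ▸ hcF) hp.2
      · exact h
    simp [hcc', hxx']
  · intro F' hF'
    simp only [Finset.coe_filter, Set.mem_setOf_eq] at hF'
    obtain ⟨hdn, huF'⟩ := hF'
    rw [mem_downNbrs_iff] at hdn
    obtain ⟨h2, hne, hint⟩ := hdn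
    have hcard3 : F'.card = 3 := (mem_iFaces_iff.1 h2).2
    have huI : u ∈ F' ∩ F := Finset.mem_inter.2 ⟨huF', huF⟩
    have h1 : ((F' ∩ F).erase u).card = 1 := by
      rw [Finset.card_erase_of_mem huI, hint]
    obtain ⟨c, hc⟩ := Finset.card_eq_one.1 h1
    have hcI : c ∈ F' ∩ F := Finset.erase_subset _ _ (hc ▸ Finset.mem_singleton_self c)
    have hcu : c ≠ u := (Finset.mem_erase.1 (hc ▸ Finset.mem_singleton_self c)).1
    have hIeq : F' ∩ F = insert u {c} := by
      rw [← Finset.insert_erase huI, hc]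
    have hcF' : c ∈ F' := (Finset.mem_inter.1 hcI).1
    have hcF : c ∈ F := (Finset.mem_inter.1 hcI).2
    have hx1 : ((F'.erase u).erase c).card = 1 := by
      rw [Finset.card_erase_of_mem (Finset.mem_erase.2 ⟨hcu, hcF'⟩),
        Finset.card_erase_of_mem huF', hcard3]
    obtain ⟨x, hx⟩ := Finset.card_eq_one.1 hx1
    have hxmem : x ∈ (F'.erase u).erase c := hx ▸ Finset.mem_singleton_self x
    have hxF' : x ∈ F' := Finset.mem_of_mem_erase (Finset.mem_of_mem_erase hxmem)
    have hxc : x ≠ c := (Finset.mem_erase.1 hxmem).1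
    have hxu : x ≠ u := (Finset.mem_erase.1 (Finset.mem_of_mem_erase hxmem)).1
    have hF'eq : F' = insert u (insert c {x}) := by
      symm
      apply Finset.eq_of_subset_of_card_le
      · intro z hz
        rcases mem_triple.1 hz with h | h | h
        · exact h ▸ huF'
        · exact h ▸ hcF'
        · exact h ▸ hxF'
      · rw [hcard3, card_triple (Ne.symm hxc) hcu hxu]
    have hxF : x ∉ F := by
      intro h
      have : x ∈ F' ∩ F := Finset.mem_inter.2 ⟨hxF', h⟩
      rw [hIeq] at this
      rcases Finset.mem_insert.1 this with h' | h'
      · exact hxu h'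
      · exact hxc (Finset.mem_singleton.1 h')
    refine ⟨(c, x), ?_, hF'eq.symm⟩
    simp only [Finset.coe_product, Set.mem_prod, Finset.mem_coe, Finset.mem_sdiff,
      Finset.mem_univ, true_and]
    constructor
    · rcases mem_triple.1 hcF with h | h | h
      · exact absurd h hcu
      · exact h ▸ Finset.mem_insert_self _ _
      · rw [h]; exact Finset.mem_insert_of_mem (Finset.mem_singleton_self b)
    · exact hxF

lemma dN_cone_card_le {K : SimplicialComplex n} {u : Fin n} {F' : Finset (Fin n)}
    (h2 : F' ∈ K.iFaces 2) (hu : u ∉ F') :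
    (((K.downNbrs F').filter (fun F'' => u ∈ F''))).card ≤ 3 := by
  have h3 : F'.card = 3 := (mem_iFaces_iff.1 h2).2
  have : (F'.powersetCard 2).card = 3 := by
    rw [Finset.card_powersetCard, h3]; rfl
  rw [← this]
  apply Finset.card_le_card_of_injOn (f := fun F'' => F'' ∩ F')
  · intro F'' hF''
    rw [Finset.mem_coe, Finset.mem_filter, mem_downNbrs_iff] at hF''
    rw [Finset.mem_coe, Finset.mem_powersetCard]
    exact ⟨Finset.inter_subset_right, hF''.1.2.2⟩
  · intro G hG G' hG' heq
    simp only [Finset.coe_filter, Set.mem_setOf_eq] at hG hG'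
    have key : ∀ H, H ∈ K.downNbrs F' → u ∈ H → H = insert u (H ∩ F') := by
      intro H hH huH
      rw [mem_downNbrs_iff] at hH
      symm
      apply Finset.eq_of_subset_of_card_le
      · exact Finset.insert_subset huH Finset.inter_subset_left
      · rw [(mem_iFaces_iff.1 hH.1).2,
          Finset.card_insert_of_notMem (fun h => hu (Finset.mem_inter.1 h).2), hH.2.2]
    have heq' : G ∩ F' = G' ∩ F' := heq
    rw [key G hG.1 hG.2, key G' hG'.1 hG'.2, heq']

lemma sign_cancel_aux {W : Finset (Fin n)} {p q : Fin n} (hp : p ∈ W) (hq : q ∈ W)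
    (hpq : p < q) :
    (-1:ℝ)^(((W.erase p).filter (fun z => z < q)).card)
      * (-1:ℝ)^((W.filter (fun z => z < p)).card)
    + (-1:ℝ)^(((W.erase q).filter (fun z => z < p)).card)
      * (-1:ℝ)^((W.filter (fun z => z < q)).card) = 0 := by
  have h1 : ((W.erase p).filter (fun z => z < q)).card
      = ((W.filter (fun z => z < q)).card) - 1 := by
    rw [Finset.filter_erase, Finset.card_erase_of_mem
      (show p ∈ W.filter (fun z => z < q) from Finset.mem_filter.2 ⟨hp, hpq⟩)]
  have h2 : ((W.erase q).filter (fun z => z < p)).card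
      = (W.filter (fun z => z < p)).card := by
    rw [Finset.filter_erase, Finset.erase_eq_of_notMem]
    intro h
    exact absurd ((Finset.mem_filter.1 h).2) (not_lt.2 hpq.le)
  have hBpos : 1 ≤ (W.filter (fun z => z < q)).card :=
    Finset.card_pos.2 ⟨p, (Finset.mem_filter.2 ⟨hp, hpq⟩ : p ∈ W.filter (fun z => z < q))⟩
  rw [h1, h2, ← pow_add, ← pow_add]
  set A := (W.filter (fun z => z < p)).card
  set B := (W.filter (fun z => z < q)).card
  have : A + B = (B - 1 + A) + 1 := by omega
  rw [this, pow_succ]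
  ring

lemma sign_cancel {W : Finset (Fin n)} {p q : Fin n} (hp : p ∈ W) (hq : q ∈ W)
    (hpq : p ≠ q) :
    (-1:ℝ)^(((W.erase p).filter (fun z => z < q)).card)
      * (-1:ℝ)^((W.filter (fun z => z < p)).card)
    + (-1:ℝ)^(((W.erase q).filter (fun z => z < p)).card)
      * (-1:ℝ)^((W.filter (fun z => z < q)).card) = 0 := by
  rcases lt_or_gt_of_ne hpq with h | h
  · exact sign_cancel_aux hp hq h
  · rw [add_comm]; exact sign_cancel_aux hq hp h

/-- The kernel vector associated to a face `F` not containing `u`. -/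
noncomputable def kvec (K : SimplicialComplex n) (u : Fin n) (F : Finset (Fin n)) :
    ↥(K.iFaces 2) → ℝ := fun F' =>
  if (F' : Finset (Fin n)) ⊆ insert u F then
    ∑ r ∈ (insert u F) \ (F' : Finset (Fin n)),
      (-1:ℝ)^(((insert u F).filter (fun z => z < r)).card)
  else 0

lemma erase_mem_iFaces {K : SimplicialComplex n} {u : Fin n} (hA : K.Apex u)
    {F : Finset (Fin n)} (hF : F ∈ K.Mu u) {y : Fin n} (hy : y ∈ insert u F) :
    (insert u F).erase y ∈ K.iFaces 2 := by
  rw [SimplicialComplex.Mu, Finset.mem_filter] at hF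
  have huF : u ∉ F := hF.2
  have h3 : F.card = 3 := (mem_iFaces_iff.1 hF.1).2
  have hW : (insert u F).card = 4 := by
    rw [Finset.card_insert_of_notMem huF, h3]
  have hcard : ((insert u F).erase y).card = 3 := by
    rw [Finset.card_erase_of_mem hy, hW]
  by_cases hu : u ∈ (insert u F).erase y
  · exact cone_mem hA hu hcard
  · have hyu : y = u := by
      by_contra hne
      exact hu (Finset.mem_erase.2 ⟨Ne.symm hne, Finset.mem_insert_self _ _⟩)
    subst hyu
    rw [Finset.erase_insert huF]
    exact hF.1

lemma kvec_ker {K : SimplicialComplex n} {u : Fin n} (hA : K.Apex u)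
    {F : Finset (Fin n)} (hF : F ∈ K.Mu u) :
    (K.signedBoundary 1).mulVecLin (kvec K u F) = 0 := by
  have hFMu := hF
  rw [SimplicialComplex.Mu, Finset.mem_filter] at hF
  have huF : u ∉ F := hF.2
  have h3 : F.card = 3 := (mem_iFaces_iff.1 hF.1).2
  set W : Finset (Fin n) := insert u F with hWdef
  have hWcard : W.card = 4 := by rw [hWdef, Finset.card_insert_of_notMem huF, h3]
  funext e
  rw [Matrix.mulVecLin_apply]
  show (K.signedBoundary 1).mulVec (kvec K u F) e = 0
  have hecard : (e : Finset (Fin n)).card = 2 := (mem_iFaces_iff.1 e.2).2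
  -- summand as a function of the underlying finset
  have hsum : (K.signedBoundary 1).mulVec (kvec K u F) e
      = ∑ G ∈ K.iFaces 2,
        (if (e : Finset (Fin n)) ⊆ G then
            ∑ v ∈ G \ (e : Finset (Fin n)),
              (-1:ℝ)^((G.filter (fun z => z < v)).card) else 0)
          * (if G ⊆ W then
              ∑ r ∈ W \ G, (-1:ℝ)^((W.filter (fun z => z < r)).card) else 0) := by
    rw [← Finset.sum_coe_sort (K.iFaces 2)]
    rfl
  rw [hsum]
  by_cases heW : (e : Finset (Fin n)) ⊆ W
  · -- identify the two missing vertices p, q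
    have hWe : (W \ (e : Finset (Fin n))).card = 2 := by
      rw [Finset.card_sdiff_of_subset heW, hWcard, hecard]
    obtain ⟨p, q, hpq, hpqeq⟩ := Finset.card_eq_two.1 hWe
    have hpW : p ∈ W := (Finset.mem_sdiff.1 (hpqeq ▸ Finset.mem_insert_self p {q})).1
    have hpe : p ∉ (e : Finset (Fin n)) :=
      (Finset.mem_sdiff.1 (hpqeq ▸ Finset.mem_insert_self p {q})).2
    have hqWe : q ∈ W \ (e : Finset (Fin n)) := hpqeq ▸
      Finset.mem_insert_of_mem (Finset.mem_singleton_self q)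
    have hqW : q ∈ W := (Finset.mem_sdiff.1 hqWe).1
    have hqe : q ∉ (e : Finset (Fin n)) := (Finset.mem_sdiff.1 hqWe).2
    have hFp : W.erase p ∈ K.iFaces 2 := erase_mem_iFaces hA hFMu hpW
    have hFq : W.erase q ∈ K.iFaces 2 := erase_mem_iFaces hA hFMu hqW
    have hFpq : W.erase p ≠ W.erase q := by
      intro h
      have : q ∈ W.erase p := Finset.mem_erase.2 ⟨Ne.symm hpq, hqW⟩
      rw [h] at this
      exact (Finset.mem_erase.1 this).1 rfl
    -- the sum reduces to the two faces W.erase p and W.erase q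
    rw [← Finset.sum_subset (s₁ := ({W.erase p, W.erase q} : Finset (Finset (Fin n))))
      (by
        intro G hG
        rcases Finset.mem_insert.1 hG with h | h
        · exact h ▸ hFp
        · exact (Finset.mem_singleton.1 h) ▸ hFq)
      (by
        intro G hG hGnot
        by_cases h1 : (e : Finset (Fin n)) ⊆ G
        · by_cases h2 : G ⊆ W
          · -- G is a 3-subset of W containing e, so G = W.erase p or W.erase q
            exfalso
            have hG3 : G.card = 3 := (mem_iFaces_iff.1 hG).2
            have hWG : (W \ G).card = 1 := by
              rw [Finset.card_sdiff_of_subset h2, hWcard, hG3]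
            obtain ⟨y, hy⟩ := Finset.card_eq_one.1 hWG
            have hyW : y ∈ W := (Finset.mem_sdiff.1 (hy ▸ Finset.mem_singleton_self y)).1
            have hyG : y ∉ G := (Finset.mem_sdiff.1 (hy ▸ Finset.mem_singleton_self y)).2
            have hGeq : G = W.erase y := by
              apply Finset.eq_of_subset_of_card_le
              · exact fun z hz => Finset.mem_erase.2 ⟨fun h => hyG (h ▸ hz), h2 hz⟩
              · rw [Finset.card_erase_of_mem hyW, hWcard, hG3]
            have hye : y ∉ (e : Finset (Fin n)) := fun h => hyG (h1 h)
            have : y ∈ ({p, q} : Finset (Fin n)) := hpqeq ▸ Finset.mem_sdiff.2 ⟨hyW, hye⟩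
            rcases Finset.mem_insert.1 this with h | h
            · exact hGnot (hGeq ▸ h ▸ Finset.mem_insert_self _ _)
            · rw [Finset.mem_singleton.1 h] at hGeq
              exact hGnot (hGeq ▸ Finset.mem_insert_of_mem (Finset.mem_singleton_self _))
          · simp [h2]
        · simp [h1])]
    rw [Finset.sum_pair hFpq]
    -- compute the four factors
    have hep : (e : Finset (Fin n)) ⊆ W.erase p :=
      fun z hz => Finset.mem_erase.2 ⟨fun h => hpe (h ▸ hz), heW hz⟩
    have heq' : (e : Finset (Fin n)) ⊆ W.erase q :=
      fun z hz => Finset.mem_erase.2 ⟨fun h => hqe (h ▸ hz), heW hz⟩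
    have hWp : W.erase p ⊆ W := Finset.erase_subset _ _
    have hWq : W.erase q ⊆ W := Finset.erase_subset _ _
    have hdiffp : W.erase p \ (e : Finset (Fin n)) = {q} := by
      ext z
      simp only [Finset.mem_sdiff, Finset.mem_erase, Finset.mem_singleton]
      constructor
      · rintro ⟨⟨hzp, hzW⟩, hze⟩
        have : z ∈ ({p, q} : Finset (Fin n)) := hpqeq ▸ Finset.mem_sdiff.2 ⟨hzW, hze⟩
        rcases Finset.mem_insert.1 this with h | h
        · exact absurd h hzp
        · exact Finset.mem_singleton.1 h
      · rintro rfl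
        exact ⟨⟨Ne.symm hpq, hqW⟩, hqe⟩
    have hdiffq : W.erase q \ (e : Finset (Fin n)) = {p} := by
      ext z
      simp only [Finset.mem_sdiff, Finset.mem_erase, Finset.mem_singleton]
      constructor
      · rintro ⟨⟨hzq, hzW⟩, hze⟩
        have : z ∈ ({p, q} : Finset (Fin n)) := hpqeq ▸ Finset.mem_sdiff.2 ⟨hzW, hze⟩
        rcases Finset.mem_insert.1 this with h | h
        · exact h
        · exact absurd (Finset.mem_singleton.1 h) hzq
      · rintro rfl
        exact ⟨⟨hpq, hpW⟩, hpe⟩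
    have hWdp : W \ W.erase p = {p} := by
      ext z
      simp only [Finset.mem_sdiff, Finset.mem_erase, Finset.mem_singleton, not_and]
      constructor
      · rintro ⟨h1, h2⟩
        by_contra h3
        exact h2 h3 h1
      · rintro rfl
        exact ⟨hpW, fun h _ => absurd rfl h⟩
    have hWdq : W \ W.erase q = {q} := by
      ext z
      simp only [Finset.mem_sdiff, Finset.mem_erase, Finset.mem_singleton, not_and]
      constructor
      · rintro ⟨h1, h2⟩
        by_contra h3
        exact h2 h3 h1
      · rintro rfl
        exact ⟨hqW, fun h _ => absurd rfl h⟩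
    rw [if_pos hep, if_pos heq', if_pos hWp, if_pos hWq, hdiffp, hdiffq, hWdp, hWdq,
      Finset.sum_singleton, Finset.sum_singleton, Finset.sum_singleton,
      Finset.sum_singleton]
    exact sign_cancel hpW hqW hpq
  · -- e ⊄ W : all terms vanish
    apply Finset.sum_eq_zero
    intro G hG
    by_cases h1 : (e : Finset (Fin n)) ⊆ G
    · by_cases h2 : G ⊆ W
      · exact absurd (h1.trans h2) heW
      · simp [h2]
    · simp [h1]

lemma Mu_subset_iFaces (K : SimplicialComplex n) (u : Fin n) :
    K.Mu u ⊆ K.iFaces 2 := Finset.filter_subset _ _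

lemma card_Mu_le {K : SimplicialComplex n} {u : Fin n} (hA : K.Apex u)
    (hP : K.IsPure 2) (hB : K.betti 2 = 2) : (K.Mu u).card ≤ 2 := by
  classical
  set A := (K.signedBoundary 1).mulVecLin with hAdef
  have hrk : (K.signedBoundary 1).rank
      + Module.finrank ℝ ↥(LinearMap.ker A) = (K.iFaces 2).card := by
    have := LinearMap.finrank_range_add_finrank_ker A
    rw [Module.finrank_fintype_fun_eq_card, Fintype.card_coe] at this
    exact this
  have hrank_le : (K.signedBoundary 1).rank ≤ (K.iFaces 2).card := by
    have := Matrix.rank_le_card_width (K.signedBoundary 1)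
    rwa [Fintype.card_coe] at this
  have hker2 : Module.finrank ℝ ↥(LinearMap.ker A) = 2 := by
    have h3 := rank3_zero hP
    rw [SimplicialComplex.betti, h3] at hB
    have hb2 : K.boundaryRank 2 = (K.signedBoundary 1).rank := rfl
    rw [hb2] at hB
    omega
  -- the kernel vectors indexed by Mu u are linearly independent
  have hMuT : ∀ m : ↥(K.Mu u), (m : Finset (Fin n)) ∈ K.iFaces 2 :=
    fun m => Mu_subset_iFaces K u m.2
  set ι : ↥(K.Mu u) → ↥(K.iFaces 2) := fun m => ⟨(m : Finset (Fin n)), hMuT m⟩ with hι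
  set v : ↥(K.Mu u) → (↥(K.iFaces 2) → ℝ) := fun m => kvec K u (m : Finset (Fin n))
    with hv
  have hcoeff : ∀ m : ↥(K.Mu u),
      v m (ι m) = (-1:ℝ)^(((insert u (m : Finset (Fin n))).filter
        (fun z => z < u)).card) := by
    intro m
    have hum : u ∉ (m : Finset (Fin n)) :=
      (Finset.mem_filter.1 m.2).2
    have hsub : ((ι m : ↥(K.iFaces 2)) : Finset (Fin n)) ⊆ insert u (m : Finset (Fin n)) :=
      Finset.subset_insert _ _
    show kvec K u _ _ = _
    rw [kvec, if_pos hsub]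
    have : insert u (m : Finset (Fin n)) \ (m : Finset (Fin n)) = {u} :=
      Finset.insert_sdiff_cancel hum
    show (∑ r ∈ insert u (m : Finset (Fin n)) \ (m : Finset (Fin n)), _) = _
    rw [this, Finset.sum_singleton]
  have hoff : ∀ m m' : ↥(K.Mu u), m ≠ m' → v m' (ι m) = 0 := by
    intro m m' hne
    have hum : u ∉ (m : Finset (Fin n)) := (Finset.mem_filter.1 m.2).2
    have h3m : (m : Finset (Fin n)).card = 3 := (mem_iFaces_iff.1 (hMuT m)).2
    have h3m' : (m' : Finset (Fin n)).card = 3 := (mem_iFaces_iff.1 (hMuT m')).2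
    show kvec K u _ _ = 0
    rw [kvec, if_neg]
    intro hsub
    -- m ⊆ insert u m' with u ∉ m gives m ⊆ m', hence m = m'
    have h1 : (m : Finset (Fin n)) ⊆ (m' : Finset (Fin n)) := by
      intro z hz
      rcases Finset.mem_insert.1 (hsub hz) with h | h
      · exact absurd (h ▸ hz) hum
      · exact h
    have := Finset.eq_of_subset_of_card_le h1 (by omega)
    exact hne (Subtype.ext this)
  have hlin : LinearIndependent ℝ v := by
    apply LinearIndependent.of_comp (LinearMap.funLeft ℝ ℝ ι)
    rw [Fintype.linearIndependent_iff]
    intro gc hgc m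
    have := congrFun hgc m
    simp only [Finset.sum_apply, Pi.smul_apply, Pi.zero_apply, smul_eq_mul] at this
    rw [Finset.sum_eq_single m (fun m' _ hne => by
        simp only [Function.comp_apply, LinearMap.funLeft_apply]
        rw [hoff m m' (Ne.symm hne), mul_zero])
      (fun h => absurd (Finset.mem_univ m) h)] at this
    simp only [Function.comp_apply, LinearMap.funLeft_apply] at this
    rw [hcoeff m] at this
    have hne : ((-1:ℝ))^(((insert u (m : Finset (Fin n))).filter
        (fun z => z < u)).card) ≠ 0 := pow_ne_zero _ (by norm_num)
    exact (mul_eq_zero.1 this).resolve_right hne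
  have hmemker : ∀ m : ↥(K.Mu u), v m ∈ LinearMap.ker A := by
    intro m
    rw [LinearMap.mem_ker, hAdef]
    exact kvec_ker hA m.2
  set v' : ↥(K.Mu u) → ↥(LinearMap.ker A) := fun m => ⟨v m, hmemker m⟩ with hv'
  have hlin' : LinearIndependent ℝ v' := by
    apply LinearIndependent.of_comp (LinearMap.ker A).subtype
    exact hlin
  have := hlin'.fintype_card_le_finrank
  rwa [Fintype.card_coe, hker2] at this

lemma edge_count {K : SimplicialComplex n} {u : Fin n} (hA : K.Apex u) (hn : 3 ≤ n)
    (S : Finset (Fin n)) :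
    (∑ e : ↥(K.iFaces 1), if (e : Finset (Fin n)) ⊆ S then (1:ℝ) else 0)
      = (S.card.choose 2 : ℝ) := by
  rw [Finset.sum_coe_sort (K.iFaces 1)
    (fun p => if p ⊆ S then (1:ℝ) else 0), Finset.sum_ite, Finset.sum_const,
    Finset.sum_const]
  have : (K.iFaces 1).filter (fun p => p ⊆ S) = S.powersetCard 2 := by
    ext p
    rw [Finset.mem_filter, Finset.mem_powersetCard, mem_iFaces_iff]
    constructor
    · rintro ⟨⟨_, h2⟩, h3⟩
      exact ⟨h3, h2⟩
    · rintro ⟨h1, h2⟩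
      exact ⟨mem_iFaces_iff.1 (edge_mem hA hn h2), h1⟩
  rw [this, Finset.card_powersetCard]
  simp

lemma edge_eigen {K : SimplicialComplex n} {f : ↥(K.iFaces 1) → ℝ} {q : ℝ}
    (hQ : (K.Qup 1).mulVec f = q • f) (e : ↥(K.iFaces 1)) :
    q * f e = ∑ F : ↥(K.iFaces 2),
      (if (e : Finset (Fin n)) ⊆ (F : Finset (Fin n)) then K.bSum 1 f F else 0) := by
  have h := congrFun hQ e
  rw [Pi.smul_apply, smul_eq_mul] at h
  rw [← h]
  show ∑ e', (K.Qup 1) e e' * f e' = _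
  simp only [SimplicialComplex.Qup, SimplicialComplex.signlessInc, Matrix.mul_apply,
    Matrix.transpose_apply, Matrix.of_apply, Finset.sum_mul]
  rw [Finset.sum_comm]
  apply Finset.sum_congr rfl
  intro F _
  by_cases hin : (e : Finset (Fin n)) ⊆ (F : Finset (Fin n))
  · simp only [hin, if_true, one_mul, SimplicialComplex.bSum]
    apply Finset.sum_congr rfl
    intro e' _
    by_cases h' : (e' : Finset (Fin n)) ⊆ (F : Finset (Fin n)) <;> simp [h']
  · simp [hin]

lemma face_eigen {K : SimplicialComplex n} {u : Fin n} (hA : K.Apex u) (hn : 3 ≤ n)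
    {f : ↥(K.iFaces 1) → ℝ} {q : ℝ} (hQ : (K.Qup 1).mulVec f = q • f)
    {F : Finset (Fin n)} (hF : F ∈ K.iFaces 2) :
    q * K.bSum 1 f F = 3 * K.bSum 1 f F + ∑ F' ∈ K.downNbrs F, K.bSum 1 f F' := by
  have hF3 : F.card = 3 := (mem_iFaces_iff.1 hF).2
  have step1 : q * K.bSum 1 f F
      = ∑ F' ∈ K.iFaces 2, (((F ∩ F').card.choose 2 : ℕ) : ℝ) * K.bSum 1 f F' := by
    rw [SimplicialComplex.bSum, Finset.mul_sum]
    have : ∀ e : ↥(K.iFaces 1),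
        q * (if (e : Finset (Fin n)) ⊆ F then f e else 0)
        = ∑ F' : ↥(K.iFaces 2), (if (e : Finset (Fin n)) ⊆ F ∩ (F' : Finset (Fin n))
            then K.bSum 1 f F' else 0) := by
      intro e
      by_cases hin : (e : Finset (Fin n)) ⊆ F
      · rw [if_pos hin, edge_eigen hQ e]
        apply Finset.sum_congr rfl
        intro F' _
        by_cases h' : (e : Finset (Fin n)) ⊆ (F' : Finset (Fin n))
        · rw [if_pos h', if_pos (Finset.subset_inter hin h')]
        · rw [if_neg h', if_neg (fun hh => h' (hh.trans Finset.inter_subset_right))]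
      · rw [if_neg hin, mul_zero]
        symm
        apply Finset.sum_eq_zero
        intro F' _
        exact if_neg (fun hh => hin (hh.trans Finset.inter_subset_left))
    rw [Finset.sum_congr rfl (fun e _ => this e), Finset.sum_comm]
    rw [← Finset.sum_coe_sort (K.iFaces 2)
      (fun G => (((F ∩ G).card.choose 2 : ℕ) : ℝ) * K.bSum 1 f G)]
    apply Finset.sum_congr rfl
    intro F' _
    have : ∀ e : ↥(K.iFaces 1),
        (if (e : Finset (Fin n)) ⊆ F ∩ (F' : Finset (Fin n)) then K.bSum 1 f F' else 0)
        = (if (e : Finset (Fin n)) ⊆ F ∩ (F' : Finset (Fin n)) then (1:ℝ) else 0)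
          * K.bSum 1 f F' := by
      intro e
      split <;> ring
    rw [Finset.sum_congr rfl (fun e _ => this e), ← Finset.sum_mul,
      edge_count hA hn (F ∩ (F' : Finset (Fin n)))]
  rw [step1]
  have split : ∀ G ∈ K.iFaces 2,
      (((F ∩ G).card.choose 2 : ℕ) : ℝ) * K.bSum 1 f G
      = (if G = F then 3 * K.bSum 1 f G else 0)
        + (if G ∈ K.downNbrs F then K.bSum 1 f G else 0) := by
    intro G hG
    have hG3 : G.card = 3 := (mem_iFaces_iff.1 hG).2
    by_cases hGF : G = F
    · subst hGF
      rw [Finset.inter_self, hG3, if_pos rfl,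
        if_neg (fun hh => absurd (mem_downNbrs_iff.1 hh).2.1 (not_not.2 rfl))]
      norm_num
    · have hle : (F ∩ G).card ≤ 2 := by
        by_contra hlt
        push_neg at hlt
        have h1 : (F ∩ G).card ≤ F.card := Finset.card_le_card Finset.inter_subset_left
        have heq : F ∩ G = F := Finset.eq_of_subset_of_card_le
          Finset.inter_subset_left (by omega)
        have : F ⊆ G := heq ▸ Finset.inter_subset_right
        exact hGF (Finset.eq_of_subset_of_card_le this (by omega)).symm
      rw [if_neg hGF]
      by_cases h2 : (F ∩ G).card = 2
      · rw [h2, if_pos (mem_downNbrs_iff.2 ⟨hG, hGF, by rw [Finset.inter_comm]; exact h2⟩)]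
        norm_num
      · have hnd : G ∉ K.downNbrs F := by
          intro hh
          apply h2
          have := (mem_downNbrs_iff.1 hh).2.2
          rwa [Finset.inter_comm] at this
        rw [if_neg hnd, Nat.choose_eq_zero_of_lt (by omega)]
        norm_num
  rw [Finset.sum_congr rfl split, Finset.sum_add_distrib, Finset.sum_ite_eq' (K.iFaces 2),
    if_pos hF]
  congr 1
  rw [Finset.sum_ite_mem]
  congr 1
  exact Finset.inter_eq_right.2 (Finset.filter_subset _ _)

end Stmt16Aux

open Stmt16Aux in
/-- under the Setup with `t = 2` plus the Apex assumption, for large `n`: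
`| ∑_{F ∈ M_u^c ∖ ({F₀} ∪ N^d(F₀))} f(∂F) − (n²/2 − 7n/2) | ≤ C`. -/
theorem stmt16 :
    ∃ (C : ℝ) (N : ℕ), ∀ n, N ≤ n → ∀ (K : SimplicialComplex n) (f : ↥(K.iFaces 1) → ℝ)
      (u v w : Fin n), Setup n 2 K f u v w → K.Apex u →
      |(∑ F ∈ K.Muc u \ insert ({u,v,w} : Finset (Fin n)) (K.downNbrs {u,v,w}),
          K.bSum 1 f F) - ((n:ℝ)^2/2 - 7*(n:ℝ)/2)| ≤ C := by
  refine ⟨100, 100, ?_⟩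
  intro n hn K f u v w hSetup hA
  obtain ⟨hKfam, -, -, hfnonneg, hQ, hF0T, hle1, hgF0, -, -⟩ := hSetup
  obtain ⟨hPure, hBetti⟩ := hKfam
  set q : ℝ := K.specRad 1 with hqdef
  set g : Finset (Fin n) → ℝ := fun F => K.bSum 1 f F with hgdef
  set F0 : Finset (Fin n) := {u, v, w} with hF0def
  have hn3 : 3 ≤ n := by omega
  have hnR : (100:ℝ) ≤ (n:ℝ) := by exact_mod_cast hn
  -- basic structure
  have hgnn : ∀ F : Finset (Fin n), 0 ≤ g F := by
    intro F
    apply Finset.sum_nonneg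
    intro e _
    split
    · exact hfnonneg e
    · exact le_refl 0
  have hF03 : F0.card = 3 := (mem_iFaces_iff.1 hF0T).2
  have huv : u ≠ v := by
    rintro rfl
    have hsub : F0 ⊆ insert u {w} := by
      intro z hz; rw [hF0def] at hz; simp at hz ⊢; tauto
    have := (Finset.card_le_card hsub).trans (Finset.card_insert_le _ _)
    simp at this; omega
  have huw : u ≠ w := by
    rintro rfl
    have hsub : F0 ⊆ insert u {v} := by
      intro z hz; rw [hF0def] at hz; simp at hz ⊢; tauto
    have := (Finset.card_le_card hsub).trans (Finset.card_insert_le _ _)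
    simp at this; omega
  have hvw : v ≠ w := by
    rintro rfl
    have hsub : F0 ⊆ insert u {v} := by
      intro z hz; rw [hF0def] at hz; simp at hz ⊢; tauto
    have := (Finset.card_le_card hsub).trans (Finset.card_insert_le _ _)
    simp at this; omega
  set cone : Finset (Finset (Fin n)) := (K.iFaces 2).filter (fun F => u ∈ F)
    with hconedef
  set X : Finset (Fin n) → Finset (Finset (Fin n)) :=
    fun F => (K.downNbrs F).filter (fun F' => u ∈ F') with hXdef
  set Y : Finset (Fin n) → Finset (Finset (Fin n)) :=
    fun F => (K.downNbrs F).filter (fun F' => u ∉ F') with hYdef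
  have hXsubT : ∀ F, X F ⊆ K.iFaces 2 := by
    intro F G hG
    exact (mem_downNbrs_iff.1 (Finset.mem_filter.1 hG).1).1
  have hXsubcone : ∀ F, X F ⊆ cone := by
    intro F G hG
    rw [hconedef, Finset.mem_filter]
    exact ⟨hXsubT F hG, (Finset.mem_filter.1 hG).2⟩
  have hYsubMu : ∀ F, Y F ⊆ K.Mu u := by
    intro F G hG
    rw [SimplicialComplex.Mu, Finset.mem_filter]
    exact ⟨(mem_downNbrs_iff.1 (Finset.mem_filter.1 hG).1).1, (Finset.mem_filter.1 hG).2⟩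
  have hconesubT : cone ⊆ K.iFaces 2 := Finset.filter_subset _ _
  have hF0cone : F0 ∈ cone := by
    rw [hconedef, Finset.mem_filter]
    exact ⟨hF0T, by rw [hF0def]; exact Finset.mem_insert_self _ _⟩
  have hMu2 : (K.Mu u).card ≤ 2 := card_Mu_le hA hPure hBetti
  -- the face--eigenvalue relation, split according to u-membership
  have hrel : ∀ F ∈ K.iFaces 2,
      (q - 3) * g F = (∑ F' ∈ X F, g F') + (∑ F' ∈ Y F, g F') := by
    intro F hF
    simp only [hXdef, hYdef, hgdef]
    have hsplit : (∑ F' ∈ (K.downNbrs F).filter (fun F' => u ∈ F'), K.bSum 1 f F')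
        + (∑ F' ∈ (K.downNbrs F).filter (fun F' => u ∉ F'), K.bSum 1 f F')
        = ∑ F' ∈ K.downNbrs F, K.bSum 1 f F' :=
      Finset.sum_filter_add_sum_filter_not _ _ _
    have hfe := face_eigen hA hn3 hQ hF
    linarith
  -- the bound on faces not containing u
  have hMuB : ∀ F' ∈ K.Mu u, (q - 3) * g F' ≤ 4 := by
    intro F' hF'
    have hT : F' ∈ K.iFaces 2 := Mu_subset_iFaces K u hF'
    have hu : u ∉ F' := (Finset.mem_filter.1 hF').2
    have hr := hrel F' hT
    have hXb : ∑ G ∈ X F', g G ≤ 3 := by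
      calc ∑ G ∈ X F', g G ≤ ∑ G ∈ X F', 1 :=
            Finset.sum_le_sum (fun G hG => hle1 G (hXsubT F' hG))
        _ = ((X F').card : ℝ) := by rw [Finset.sum_const, nsmul_eq_mul, mul_one]
        _ ≤ 3 := by
            have := dN_cone_card_le (u := u) hT hu
            rw [hXdef]
            exact_mod_cast this
    have hYb : ∑ G ∈ Y F', g G ≤ 1 := by
      have hsub : Y F' ⊆ (K.Mu u).erase F' := by
        intro G hG
        rw [Finset.mem_erase]
        exact ⟨(mem_downNbrs_iff.1 (Finset.mem_filter.1 hG).1).2.1, hYsubMu F' hG⟩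
      calc ∑ G ∈ Y F', g G ≤ ∑ G ∈ (K.Mu u).erase F', g G :=
            Finset.sum_le_sum_of_subset_of_nonneg hsub (fun G _ _ => hgnn G)
        _ ≤ ∑ G ∈ (K.Mu u).erase F', 1 :=
            Finset.sum_le_sum (fun G hG => hle1 G (Mu_subset_iFaces K u
              (Finset.mem_of_mem_erase hG)))
        _ = (((K.Mu u).erase F').card : ℝ) := by
            rw [Finset.sum_const, nsmul_eq_mul, mul_one]
        _ ≤ 1 := by
            have := Finset.card_erase_of_mem hF'
            have h2 := hMu2
            have : ((K.Mu u).erase F').card ≤ 1 := by omega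
            exact_mod_cast this
    linarith
  have hYB : ∀ F : Finset (Fin n), (q - 3) * (∑ F' ∈ Y F, g F') ≤ 8 := by
    intro F
    rw [Finset.mul_sum]
    calc ∑ F' ∈ Y F, (q - 3) * g F' ≤ ∑ F' ∈ Y F, 4 :=
          Finset.sum_le_sum (fun G hG => hMuB G (hYsubMu F hG))
      _ = ((Y F).card : ℝ) * 4 := by rw [Finset.sum_const, nsmul_eq_mul]
      _ ≤ 2 * 4 := by
          have h1 : (Y F).card ≤ (K.Mu u).card := Finset.card_le_card (hYsubMu F)
          have : (Y F).card ≤ 2 := h1.trans hMu2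
          have : ((Y F).card : ℝ) ≤ 2 := by exact_mod_cast this
          linarith
      _ = 8 := by norm_num
  have hYnn : ∀ F : Finset (Fin n), 0 ≤ ∑ F' ∈ Y F, g F' :=
    fun F => Finset.sum_nonneg (fun G _ => hgnn G)
  -- counting: every cone face has exactly 2(n-3) cone neighbours
  have hXcard : ∀ F ∈ cone, (X F).card = 2 * (n - 3) := by
    intro F hF
    rw [hconedef, Finset.mem_filter] at hF
    obtain ⟨a, b, hab, hau, hbu, hFeq⟩ :=
      triple_decomp hF.2 ((mem_iFaces_iff.1 hF.1).2)
    rw [hXdef]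
    simp only
    rw [hFeq]
    exact X_card hA hab hau hbu
  have hXcardR : ∀ F ∈ cone, ((X F).card : ℝ) = 2 * ((n:ℝ) - 3) := by
    intro F hF
    rw [hXcard F hF]
    push_cast [Nat.cast_sub hn3]
    ring
  have hXeq : ∀ F : Finset (Fin n), X F = cone.filter (fun G => G ∈ K.downNbrs F) := by
    intro F
    ext G
    rw [hXdef]
    simp only [Finset.mem_filter, hconedef]
    constructor
    · rintro ⟨h1, h2⟩
      exact ⟨⟨(mem_downNbrs_iff.1 h1).1, h2⟩, h1⟩
    · rintro ⟨⟨_, h2⟩, h3⟩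
      exact ⟨h3, h2⟩
  -- the lower bound on q
  have hq : 2 * ((n:ℝ) - 3) ≤ q - 3 := by
    set s : ℝ := ∑ F ∈ cone, g F with hsdef
    have hs1 : 1 ≤ s := by
      have h0 : g F0 = 1 := hgF0
      calc (1:ℝ) = g F0 := h0.symm
        _ ≤ s := Finset.single_le_sum (fun G _ => hgnn G) hF0cone
    have hspos : 0 < s := by linarith
    have hdouble : ∑ F ∈ cone, ∑ G ∈ X F, g G
        = ∑ G ∈ cone, ((X G).card : ℝ) * g G := by
      calc ∑ F ∈ cone, ∑ G ∈ X F, g G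
          = ∑ F ∈ cone, ∑ G ∈ cone, if G ∈ K.downNbrs F then g G else 0 := by
            apply Finset.sum_congr rfl
            intro F _
            rw [hXeq F, Finset.sum_filter]
        _ = ∑ G ∈ cone, ∑ F ∈ cone, if G ∈ K.downNbrs F then g G else 0 :=
            Finset.sum_comm
        _ = ∑ G ∈ cone, ∑ F ∈ cone, if F ∈ K.downNbrs G then g G else 0 := by
            apply Finset.sum_congr rfl
            intro G hG
            apply Finset.sum_congr rfl
            intro F hF
            have hGT := hconesubT hG
            have hFT := hconesubT hF
            have hiff : G ∈ K.downNbrs F ↔ F ∈ K.downNbrs G :=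
              ⟨fun h => downNbrs_symm hFT h, fun h => downNbrs_symm hGT h⟩
            exact if_congr hiff rfl rfl
        _ = ∑ G ∈ cone, ((X G).card : ℝ) * g G := by
            apply Finset.sum_congr rfl
            intro G _
            rw [← Finset.sum_filter, ← hXeq G, Finset.sum_const, nsmul_eq_mul]
    have hglobal : (q - 3) * s = 2 * ((n:ℝ) - 3) * s
        + ∑ F ∈ cone, ∑ G ∈ Y F, g G := by
      rw [hsdef, Finset.mul_sum, Finset.mul_sum]
      rw [Finset.sum_congr rfl (fun F hF => hrel F (hconesubT hF)),
        Finset.sum_add_distrib, hdouble]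
      congr 1
      apply Finset.sum_congr rfl
      intro G hG
      rw [hXcardR G hG]
    have hYsum : 0 ≤ ∑ F ∈ cone, ∑ G ∈ Y F, g G :=
      Finset.sum_nonneg (fun F _ => Finset.sum_nonneg (fun G _ => hgnn G))
    have hmul : 2 * ((n:ℝ) - 3) * s ≤ (q - 3) * s := by linarith
    exact le_of_mul_le_mul_right hmul hspos
  have hq3 : (0:ℝ) < q - 3 := by linarith
  -- level 1 : deficiency of neighbours of F0
  have hXF0card : ((X F0).card : ℝ) = 2 * ((n:ℝ) - 3) := hXcardR F0 hF0cone
  have hD1 : ∑ F' ∈ X F0, (1 - g F') = 2 * ((n:ℝ) - 3) - (q - 3) + ∑ F' ∈ Y F0, g F' := by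
    rw [Finset.sum_sub_distrib, Finset.sum_const, nsmul_eq_mul, hXF0card]
    have h := hrel F0 hF0T
    rw [show g F0 = 1 from hgF0] at h
    linarith
  have hD1le : ∑ F' ∈ X F0, (1 - g F') ≤ ∑ F' ∈ Y F0, g F' := by
    rw [hD1]; linarith
  have hD1nn : (0:ℝ) ≤ ∑ F' ∈ X F0, (1 - g F') := by
    apply Finset.sum_nonneg
    intro G hG
    have := hle1 G (hXsubT F0 hG)
    linarith
  -- level 2
  have hL2 : ∀ F' ∈ X F0, ∑ F'' ∈ X F', (1 - g F'')
      ≤ (q - 3) * (1 - g F') + ∑ F'' ∈ Y F', g F'' := by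
    intro F' hF'
    have hF'cone : F' ∈ cone := hXsubcone F0 hF'
    have hF'T : F' ∈ K.iFaces 2 := hconesubT hF'cone
    have hr := hrel F' hF'T
    have hcard := hXcardR F' hF'cone
    rw [Finset.sum_sub_distrib, Finset.sum_const, nsmul_eq_mul, mul_one, hcard]
    linarith
  have hS2 : ∑ F' ∈ X F0, ∑ F'' ∈ X F', (1 - g F'') ≤ 16 := by
    have step1 : ∑ F' ∈ X F0, ∑ F'' ∈ X F', (1 - g F'')
        ≤ ∑ F' ∈ X F0, ((q - 3) * (1 - g F') + ∑ F'' ∈ Y F', g F'') :=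
      Finset.sum_le_sum hL2
    have step2 : ∑ F' ∈ X F0, ((q - 3) * (1 - g F') + ∑ F'' ∈ Y F', g F'')
        = (q - 3) * (∑ F' ∈ X F0, (1 - g F')) + ∑ F' ∈ X F0, ∑ F'' ∈ Y F', g F'' := by
      rw [Finset.sum_add_distrib, Finset.mul_sum]
    have step3 : (q - 3) * (∑ F' ∈ X F0, (1 - g F')) ≤ 8 := by
      have h1 : (q - 3) * (∑ F' ∈ X F0, (1 - g F'))
          ≤ (q - 3) * (∑ F' ∈ Y F0, g F') :=
        mul_le_mul_of_nonneg_left hD1le (le_of_lt hq3)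
      exact h1.trans (hYB F0)
    have step4 : ∑ F' ∈ X F0, ∑ F'' ∈ Y F', g F'' ≤ 8 := by
      have hper : ∀ F' ∈ X F0, ∑ F'' ∈ Y F', g F'' ≤ 8 / (q - 3) := by
        intro F' _
        rw [le_div_iff₀ hq3]
        have := hYB F'
        linarith
      calc ∑ F' ∈ X F0, ∑ F'' ∈ Y F', g F'' ≤ ∑ F' ∈ X F0, (8 / (q - 3)) :=
            Finset.sum_le_sum hper
        _ = ((X F0).card : ℝ) * (8 / (q - 3)) := by
            rw [Finset.sum_const, nsmul_eq_mul]
        _ ≤ (q - 3) * (8 / (q - 3)) := by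
            apply mul_le_mul_of_nonneg_right _ (by positivity)
            rw [hXF0card]; exact hq
        _ = 8 := by field_simp
    linarith
  -- coverage : every face of the index set is a neighbour of a neighbour of F0
  set Z : Finset (Finset (Fin n)) := K.Muc u \ insert F0 (K.downNbrs F0) with hZdef
  have hZsubcone : Z ⊆ cone := by
    intro G hG
    rw [hZdef, Finset.mem_sdiff, Muc_eq] at hG
    exact hG.1
  have hvF0 : v ∈ F0 := by
    rw [hF0def]; exact Finset.mem_insert_of_mem (Finset.mem_insert_self _ _)
  have hcov : ∀ G ∈ Z, ∃ F' ∈ X F0, G ∈ K.downNbrs F' := by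
    intro G hG
    rw [hZdef, Finset.mem_sdiff, Muc_eq, Finset.mem_insert] at hG
    obtain ⟨hGcone, hGnot⟩ := hG
    rw [Finset.mem_filter] at hGcone
    obtain ⟨hGT, huG⟩ := hGcone
    have hG3 : G.card = 3 := (mem_iFaces_iff.1 hGT).2
    have hGne : G ≠ F0 := fun h => hGnot (Or.inl h)
    have hGnd : G ∉ K.downNbrs F0 := fun h => hGnot (Or.inr h)
    obtain ⟨a, b, hab, hau, hbu, hGeq⟩ := triple_decomp huG hG3
    have key : ∀ z ∈ G, z ≠ u → z ∉ F0 := by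
      intro z hz hzu hzF0
      have h2sub : ({u, z} : Finset (Fin n)) ⊆ G ∩ F0 := by
        intro y hy
        rcases Finset.mem_insert.1 hy with h | h
        · subst h
          exact Finset.mem_inter.2 ⟨huG, by rw [hF0def]; exact Finset.mem_insert_self _ _⟩
        · rw [Finset.mem_singleton.1 h]
          exact Finset.mem_inter.2 ⟨hz, hzF0⟩
      have hcard2 : 2 ≤ (G ∩ F0).card := by
        have h2 : ({u, z} : Finset (Fin n)).card = 2 := by
          rw [Finset.card_insert_of_notMem (by simp [Ne.symm hzu]),
            Finset.card_singleton]
        rw [← h2]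
        exact Finset.card_le_card h2sub
      have hle3 : (G ∩ F0).card ≤ 3 := by
        have := Finset.card_le_card (Finset.inter_subset_left : G ∩ F0 ⊆ G)
        omega
      by_cases hc2 : (G ∩ F0).card = 2
      · exact hGnd (mem_downNbrs_iff.2 ⟨hGT, hGne, hc2⟩)
      · have hc3 : (G ∩ F0).card = 3 := by omega
        have hGsub : G ⊆ F0 := by
          have h1 : G ∩ F0 = G := Finset.eq_of_subset_of_card_le
            Finset.inter_subset_left (by omega)
          rw [← h1]
          exact Finset.inter_subset_right
        exact hGne (Finset.eq_of_subset_of_card_le hGsub (by omega))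
    have haG : a ∈ G := by rw [hGeq]; exact mem_triple.2 (Or.inr (Or.inl rfl))
    have hbG : b ∈ G := by rw [hGeq]; exact mem_triple.2 (Or.inr (Or.inr rfl))
    have haF0 : a ∉ F0 := key a haG hau
    have hbF0 : b ∉ F0 := key b hbG hbu
    have hva : v ≠ a := fun h => haF0 (h ▸ hvF0)
    have hvG : v ∉ G := by
      intro h
      rw [hGeq] at h
      rcases mem_triple.1 h with h' | h' | h'
      · exact huv h'.symm
      · exact hva h'
      · exact hbF0 (h' ▸ hvF0)
    set F' : Finset (Fin n) := insert u (insert v {a}) with hF'def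
    have hF'T : F' ∈ K.iFaces 2 :=
      cone_mem hA (Finset.mem_insert_self _ _) (card_triple hva (Ne.symm huv) hau)
    have haF' : a ∈ F' := mem_triple.2 (Or.inr (Or.inr rfl))
    have hvF' : v ∈ F' := mem_triple.2 (Or.inr (Or.inl rfl))
    have hF'ne : F' ≠ F0 := fun h => haF0 (h ▸ haF')
    have hF'int : (F' ∩ F0).card = 2 := by
      have : F' ∩ F0 = insert u {v} := by
        ext z
        rw [Finset.mem_inter, hF'def]
        simp only [mem_triple, Finset.mem_insert, Finset.mem_singleton]
        constructor
        · rintro ⟨h1 | h1 | h1, h2⟩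
          · exact Or.inl h1
          · exact Or.inr h1
          · exact absurd (h1 ▸ h2) haF0
        · rintro (h | h)
          · subst h; exact ⟨Or.inl rfl, by rw [hF0def]; exact Finset.mem_insert_self _ _⟩
          · subst h; exact ⟨Or.inr (Or.inl rfl), hvF0⟩
      rw [this, Finset.card_insert_of_notMem (by simp [huv]), Finset.card_singleton]
    have hF'X : F' ∈ X F0 := by
      rw [hXdef]
      exact Finset.mem_filter.2 ⟨mem_downNbrs_iff.2 ⟨hF'T, hF'ne, hF'int⟩,
        Finset.mem_insert_self _ _⟩
    have hGneF' : G ≠ F' := fun h => hvG (h ▸ hvF')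
    have hGint : (G ∩ F').card = 2 := by
      have hbv : b ≠ v := fun h => hbF0 (h ▸ hvF0)
      have : G ∩ F' = insert u {a} := by
        ext z
        rw [Finset.mem_inter, hF'def, hGeq]
        simp only [mem_triple, Finset.mem_insert, Finset.mem_singleton]
        constructor
        · rintro ⟨h1 | h1 | h1, h2⟩
          · exact Or.inl h1
          · exact Or.inr h1
          · subst h1
            rcases h2 with h | h | h
            · exact absurd h hbu
            · exact absurd h hbv
            · exact absurd h (Ne.symm hab)
        · rintro (h | h)
          · subst h; exact ⟨Or.inl rfl, Or.inl rfl⟩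
          · subst h; exact ⟨Or.inr (Or.inl rfl), Or.inr (Or.inr rfl)⟩
      rw [this, Finset.card_insert_of_notMem (Finset.notMem_singleton.2 (Ne.symm hau)),
        Finset.card_singleton]
    exact ⟨F', hF'X, mem_downNbrs_iff.2 ⟨hGT, hGneF', hGint⟩⟩
  have hDZ : ∑ G ∈ Z, (1 - g G) ≤ ∑ F' ∈ X F0, ∑ F'' ∈ X F', (1 - g F'') := by
    have h1g : ∀ G ∈ cone, (0:ℝ) ≤ 1 - g G := by
      intro G hG
      have := hle1 G (hconesubT hG)
      linarith
    calc ∑ G ∈ Z, (1 - g G)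
        = ∑ G ∈ cone, (if G ∈ Z then (1 - g G) else 0) := by
          rw [Finset.sum_ite_mem, Finset.inter_eq_right.2 hZsubcone]
      _ ≤ ∑ G ∈ cone, (((X F0).filter (fun F' => G ∈ K.downNbrs F')).card : ℝ)
            * (1 - g G) := by
          apply Finset.sum_le_sum
          intro G hG
          by_cases hGZ : G ∈ Z
          · rw [if_pos hGZ]
            obtain ⟨F', hF'X, hF'dn⟩ := hcov G hGZ
            have hc : 1 ≤ ((X F0).filter (fun F' => G ∈ K.downNbrs F')).card :=
              Finset.card_pos.2 ⟨F', Finset.mem_filter.2 ⟨hF'X, hF'dn⟩⟩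
            exact le_mul_of_one_le_left (h1g G hG) (by exact_mod_cast hc)
          · rw [if_neg hGZ]
            exact mul_nonneg (by positivity) (h1g G hG)
      _ = ∑ G ∈ cone, ∑ F' ∈ X F0, (if G ∈ K.downNbrs F' then (1 - g G) else 0) := by
          apply Finset.sum_congr rfl
          intro G _
          rw [Finset.sum_ite, Finset.sum_const, Finset.sum_const, nsmul_eq_mul]
          simp
      _ = ∑ F' ∈ X F0, ∑ G ∈ cone, (if G ∈ K.downNbrs F' then (1 - g G) else 0) :=
          Finset.sum_comm
      _ = ∑ F' ∈ X F0, ∑ F'' ∈ X F', (1 - g F'') := by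
          apply Finset.sum_congr rfl
          intro F' _
          rw [hXeq F']
          exact (Finset.sum_filter _ _).symm
  have hDZnn : (0:ℝ) ≤ ∑ G ∈ Z, (1 - g G) := by
    apply Finset.sum_nonneg
    intro G hG
    have := hle1 G (hconesubT (hZsubcone hG))
    linarith
  -- cardinality of Z
  have hZcard : ((Z.card : ℝ)) = (n:ℝ)^2/2 - 7*(n:ℝ)/2 + 6 := by
    have hZeq : Z = cone \ insert F0 (X F0) := by
      ext G
      rw [hZdef, Finset.mem_sdiff, Finset.mem_sdiff, Muc_eq, Finset.mem_insert,
        Finset.mem_insert]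
      constructor
      · rintro ⟨h1, h2⟩
        refine ⟨h1, ?_⟩
        rintro (h | h)
        · exact h2 (Or.inl h)
        · exact h2 (Or.inr ((Finset.mem_filter.1 h).1))
      · rintro ⟨h1, h2⟩
        refine ⟨h1, ?_⟩
        rintro (h | h)
        · exact h2 (Or.inl h)
        · refine h2 (Or.inr (Finset.mem_filter.2 ⟨h, ?_⟩))
          exact (Finset.mem_filter.1 h1).2
    have hF0nX : F0 ∉ X F0 := by
      intro h
      exact (mem_downNbrs_iff.1 (Finset.mem_filter.1 h).1).2.1 rfl
    have hsub : insert F0 (X F0) ⊆ cone :=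
      Finset.insert_subset hF0cone (hXsubcone F0)
    have hcardins : (insert F0 (X F0)).card = 2*(n-3) + 1 := by
      rw [Finset.card_insert_of_notMem hF0nX, hXcard F0 hF0cone]
    have hZc : Z.card = cone.card - (2*(n-3) + 1) := by
      rw [hZeq, Finset.card_sdiff_of_subset hsub, hcardins]
    have hle : 2*(n-3) + 1 ≤ cone.card := by
      rw [← hcardins]
      exact Finset.card_le_card hsub
    have hcone2 : cone.card = (n-1).choose 2 := cone_card hA
    have hcast : ((Z.card : ℝ)) = ((cone.card : ℝ)) - ((2*(n-3) + 1 : ℕ) : ℝ) := by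
      rw [hZc, Nat.cast_sub hle]
    rw [hcast, hcone2]
    have h1 : ((n - 1 : ℕ) : ℝ) = (n:ℝ) - 1 := by
      rw [Nat.cast_sub (by omega)]; norm_num
    have hch : (((n-1).choose 2 : ℕ) : ℝ) = ((n:ℝ)-1) * ((n:ℝ)-2) / 2 := by
      rw [Nat.cast_choose_two, h1]
      ring
    rw [hch]
    have h2 : ((2*(n-3) + 1 : ℕ) : ℝ) = 2*((n:ℝ)-3) + 1 := by
      push_cast [Nat.cast_sub hn3]
      ring
    rw [h2]
    ring
  -- assemble
  have hsumZ : ∑ F ∈ Z, g F = (Z.card : ℝ) - ∑ G ∈ Z, (1 - g G) := by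
    rw [Finset.sum_sub_distrib, Finset.sum_const, nsmul_eq_mul, mul_one]
    ring
  rw [hsumZ, hZcard]
  have h16 : ∑ G ∈ Z, (1 - g G) ≤ 16 := le_trans hDZ hS2
  rw [abs_le]
  constructor <;> linarith
end

section
/- There exist constants C and N such that for every n ≥ N the following holds under the Setup with t = 2, together with the Apex assumption: for every vertex x ∈ {1,…,n} with x ≠ u, | f({u,x}) − 1/2 + 1/(4n) | ≤ C/n². -/
open Finset Matrix

open SimplicialComplex

section Aux

namespace SimplicialComplex

variable {n : ℕ} {K : SimplicialComplex n} {u : Fin n}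

lemma mem_iFaces_iff {i : ℕ} {F : Finset (Fin n)} :
    F ∈ K.iFaces i ↔ F ∈ K.faces ∧ F.card = i + 1 := Finset.mem_filter

lemma card_triple {a b c : Fin n} (hab : a ≠ b) (hac : a ≠ c) (hbc : b ≠ c) :
    ({a, b, c} : Finset (Fin n)).card = 3 := by
  rw [Finset.card_insert_of_notMem (by simp [hab, hac]), Finset.card_pair hbc]

lemma triple_mem (hA : K.Apex u) {F : Finset (Fin n)} (hF : F.card = 3) (hu : u ∈ F) :
    F ∈ K.iFaces 2 := mem_iFaces_iff.2 ⟨hA F hF hu, hF⟩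

lemma pair_mem (hA : K.Apex u) (hn : 4 ≤ n) {p : Finset (Fin n)} (hp : p.card = 2) :
    p ∈ K.iFaces 1 := by
  have hple : p.Nonempty := Finset.card_pos.1 (by omega)
  by_cases hu : u ∈ p
  · have hlt : (insert u p).card < n := by
      have := Finset.card_insert_le u p
      have := Finset.card_le_card (Finset.subset_univ (insert u p))
      simp only [Finset.card_univ, Fintype.card_fin] at *
      omega
    have hco : ((insert u p)ᶜ : Finset (Fin n)).Nonempty := by
      rw [← Finset.card_pos, Finset.card_compl]
      simp only [Fintype.card_fin]
      omega
    obtain ⟨z, hz⟩ := hco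
    rw [Finset.mem_compl] at hz
    have hzp : z ∉ p := fun h => hz (Finset.mem_insert_of_mem h)
    have hT : (insert z p).card = 3 := by rw [Finset.card_insert_of_notMem hzp, hp]
    have hTu : u ∈ insert z p := Finset.mem_insert_of_mem hu
    have hface := hA _ hT hTu
    exact mem_iFaces_iff.2 ⟨K.down_closed _ hface p (Finset.subset_insert _ _) hple, hp⟩
  · have hT : (insert u p).card = 3 := by rw [Finset.card_insert_of_notMem hu, hp]
    have hface := hA _ hT (Finset.mem_insert_self _ _)
    exact mem_iFaces_iff.2 ⟨K.down_closed _ hface p (Finset.subset_insert _ _) hple, hp⟩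

lemma bSum_pair {f : ↥(K.iFaces 1) → ℝ} {p : Finset (Fin n)} (hp : p ∈ K.iFaces 1) :
    K.bSum 1 f p = f ⟨p, hp⟩ := by
  unfold bSum
  rw [Fintype.sum_eq_single (⟨p, hp⟩ : ↥(K.iFaces 1))]
  · simp
  · intro F hF
    rw [if_neg]
    intro hsub
    apply hF
    have hc : (F : Finset (Fin n)).card = 2 := (mem_iFaces_iff.1 F.2).2
    have hc2 : p.card = 2 := (mem_iFaces_iff.1 hp).2
    refine Subtype.ext (Finset.eq_of_subset_of_card_le hsub ?_)
    show p.card ≤ (F : Finset (Fin n)).card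
    omega

lemma two_subsets_of_triple {a b c : Fin n} (hab : a ≠ b) (hac : a ≠ c) (hbc : b ≠ c)
    {p : Finset (Fin n)} (hsub : p ⊆ {a, b, c}) (hp : p.card = 2) :
    p = {a, b} ∨ p = {a, c} ∨ p = {b, c} := by
  obtain ⟨s, t, hst, rfl⟩ := Finset.card_eq_two.1 hp
  have hs : s ∈ ({a, b, c} : Finset (Fin n)) := hsub (by simp)
  have ht : t ∈ ({a, b, c} : Finset (Fin n)) := hsub (by simp)
  simp only [Finset.mem_insert, Finset.mem_singleton] at hs ht
  rcases hs with rfl | rfl | rfl <;> rcases ht with rfl | rfl | rfl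
  · exact absurd rfl hst
  · exact Or.inl rfl
  · exact Or.inr (Or.inl rfl)
  · exact Or.inl (Finset.pair_comm _ _)
  · exact absurd rfl hst
  · exact Or.inr (Or.inr rfl)
  · exact Or.inr (Or.inl (Finset.pair_comm _ _))
  · exact Or.inr (Or.inr (Finset.pair_comm _ _))
  · exact absurd rfl hst

lemma bSum_triple (hA : K.Apex u) (hn : 4 ≤ n) {f : ↥(K.iFaces 1) → ℝ} {a b c : Fin n}
    (hab : a ≠ b) (hac : a ≠ c) (hbc : b ≠ c) :
    K.bSum 1 f {a, b, c} = K.bSum 1 f {a, b} + K.bSum 1 f {a, c} + K.bSum 1 f {b, c} := by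
  have h1 : ({a, b} : Finset (Fin n)) ∈ K.iFaces 1 := pair_mem hA hn (Finset.card_pair hab)
  have h2 : ({a, c} : Finset (Fin n)) ∈ K.iFaces 1 := pair_mem hA hn (Finset.card_pair hac)
  have h3 : ({b, c} : Finset (Fin n)) ∈ K.iFaces 1 := pair_mem hA hn (Finset.card_pair hbc)
  have hne12 : (⟨{a,b}, h1⟩ : ↥(K.iFaces 1)) ≠ ⟨{a,c}, h2⟩ := by
    intro h
    have heq : ({a,b} : Finset (Fin n)) = {a,c} := Subtype.mk_eq_mk.1 h
    have hcmem : c ∈ ({a, b} : Finset (Fin n)) := by rw [heq]; simp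
    simp only [Finset.mem_insert, Finset.mem_singleton] at hcmem
    rcases hcmem with h' | h' <;> simp_all
  have hne13 : (⟨{a,b}, h1⟩ : ↥(K.iFaces 1)) ≠ ⟨{b,c}, h3⟩ := by
    intro h
    have heq : ({a,b} : Finset (Fin n)) = {b,c} := Subtype.mk_eq_mk.1 h
    have hcmem : c ∈ ({a, b} : Finset (Fin n)) := by rw [heq]; simp
    simp only [Finset.mem_insert, Finset.mem_singleton] at hcmem
    rcases hcmem with h' | h' <;> simp_all
  have hne23 : (⟨{a,c}, h2⟩ : ↥(K.iFaces 1)) ≠ ⟨{b,c}, h3⟩ := by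
    intro h
    have heq : ({a,c} : Finset (Fin n)) = {b,c} := Subtype.mk_eq_mk.1 h
    have hbmem : b ∈ ({a, c} : Finset (Fin n)) := by rw [heq]; simp
    simp only [Finset.mem_insert, Finset.mem_singleton] at hbmem
    rcases hbmem with h' | h' <;> simp_all
  have hsab : ({a,b} : Finset (Fin n)) ⊆ {a,b,c} := by intro x hx; simp at hx ⊢; tauto
  have hsac : ({a,c} : Finset (Fin n)) ⊆ {a,b,c} := by intro x hx; simp at hx ⊢; tauto
  have hsbc : ({b,c} : Finset (Fin n)) ⊆ {a,b,c} := by intro x hx; simp at hx ⊢; tauto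
  set t : Finset ↥(K.iFaces 1) := {⟨{a,b}, h1⟩, ⟨{a,c}, h2⟩, ⟨{b,c}, h3⟩} with ht
  have hzero : ∀ F ∈ (Finset.univ : Finset ↥(K.iFaces 1)), F ∉ t →
      (if (F : Finset (Fin n)) ⊆ {a, b, c} then f F else 0) = 0 := by
    intro F _ hF
    rw [if_neg]
    intro hsub
    apply hF
    have hc : (F : Finset (Fin n)).card = 2 := (mem_iFaces_iff.1 F.2).2
    simp only [ht, Finset.mem_insert, Finset.mem_singleton]
    rcases two_subsets_of_triple hab hac hbc hsub hc with h | h | h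
    · exact Or.inl (Subtype.ext h)
    · exact Or.inr (Or.inl (Subtype.ext h))
    · exact Or.inr (Or.inr (Subtype.ext h))
  rw [bSum_pair h1, bSum_pair h2, bSum_pair h3]
  unfold bSum
  rw [← Finset.sum_subset (Finset.subset_univ t) hzero, ht,
    Finset.sum_insert (by simp [hne12, hne13]), Finset.sum_insert (by simpa using hne23),
    Finset.sum_singleton]
  rw [if_pos hsab, if_pos hsac, if_pos hsbc]; ring


lemma eigen_eq {q : ℝ} {f : ↥(K.iFaces 1) → ℝ} (hf : (K.Qup 1).mulVec f = q • f)
    {p : Finset (Fin n)} (hp : p ∈ K.iFaces 1) :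
    q * K.bSum 1 f p = ∑ F ∈ (K.iFaces 2).filter (fun F => p ⊆ F), K.bSum 1 f F := by
  have h1 : ((K.Qup 1).mulVec f) ⟨p, hp⟩ = q * f ⟨p, hp⟩ := by rw [hf]; rfl
  have h2 : ((K.Qup 1).mulVec f) ⟨p, hp⟩
      = ∑ F : ↥(K.iFaces 2), (if p ⊆ (F : Finset (Fin n)) then K.bSum 1 f F else 0) := by
    simp only [Qup, Matrix.mulVec, dotProduct, Matrix.mul_apply, signlessInc,
      Matrix.transpose_apply, Matrix.of_apply, Finset.sum_mul]
    rw [Finset.sum_comm]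
    refine Finset.sum_congr rfl fun F _ => ?_
    by_cases hpF : p ⊆ (F : Finset (Fin n))
    · rw [if_pos hpF, if_pos hpF]
      unfold bSum
      refine Finset.sum_congr rfl fun e _ => ?_
      by_cases he : (e : Finset (Fin n)) ⊆ (F : Finset (Fin n)) <;> simp [he]
    · rw [if_neg hpF, if_neg hpF]
      simp
  rw [bSum_pair hp, ← h1, h2,
    Finset.sum_coe_sort (K.iFaces 2) (fun F => if p ⊆ F then K.bSum 1 f F else 0),
    Finset.sum_filter]

lemma filter_u_pair (hA : K.Apex u) {x : Fin n} (hx : x ≠ u) :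
    (K.iFaces 2).filter (fun F => ({u, x} : Finset (Fin n)) ⊆ F)
      = ((({u} : Finset (Fin n))ᶜ).erase x).image (fun y => {u, x, y}) := by
  ext F
  simp only [Finset.mem_filter, Finset.mem_image, Finset.mem_erase, Finset.mem_compl,
    Finset.mem_singleton]
  constructor
  · rintro ⟨hF2, hsub⟩
    have hc3 : F.card = 3 := (mem_iFaces_iff.1 hF2).2
    have hcux : ({u, x} : Finset (Fin n)).card = 2 := Finset.card_pair (Ne.symm hx)
    have hd : (F \ {u, x}).card = 1 := by
      rw [Finset.card_sdiff_of_subset hsub]; omega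
    obtain ⟨y, hy⟩ := Finset.card_eq_one.1 hd
    have hyF : y ∈ F \ ({u, x} : Finset (Fin n)) := by rw [hy]; simp
    rw [Finset.mem_sdiff, Finset.mem_insert, Finset.mem_singleton] at hyF
    refine ⟨y, ⟨fun h => hyF.2 (Or.inr h), fun h => hyF.2 (Or.inl h)⟩, ?_⟩
    have := Finset.union_sdiff_of_subset hsub
    rw [hy] at this
    rw [← this]
    ext z; simp [Finset.mem_insert, Finset.mem_singleton]
  · rintro ⟨y, ⟨hyx, hyu⟩, rfl⟩
    refine ⟨triple_mem hA ?_ (by simp), ?_⟩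
    · exact card_triple (Ne.symm hx) (Ne.symm hyu) (Ne.symm hyx)
    · intro z hz; simp at hz ⊢; tauto

lemma filter_nonu_pair (hA : K.Apex u) {p : Finset (Fin n)} (hp : p.card = 2) (hu : u ∉ p) :
    (K.iFaces 2).filter (fun F => p ⊆ F)
      = insert (insert u p) ((K.Mu u).filter (fun F => p ⊆ F)) := by
  have hc : (insert u p).card = 3 := by rw [Finset.card_insert_of_notMem hu, hp]
  apply Finset.ext
  intro F
  constructor
  · intro hFm
    rw [Finset.mem_filter] at hFm
    obtain ⟨hF2, hsub⟩ := hFm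
    have hc3 : F.card = 3 := (mem_iFaces_iff.1 hF2).2
    rw [Finset.mem_insert]
    by_cases huF : u ∈ F
    · left
      have hsub2 : insert u p ⊆ F := Finset.insert_subset huF hsub
      exact (Finset.eq_of_subset_of_card_le hsub2 (by omega)).symm
    · right
      rw [Finset.mem_filter]
      refine ⟨?_, hsub⟩
      simp only [Mu, Finset.mem_filter]
      exact ⟨hF2, huF⟩
  · intro hFm
    rw [Finset.mem_insert] at hFm
    rcases hFm with rfl | hFm
    · exact Finset.mem_filter.2
        ⟨triple_mem hA hc (Finset.mem_insert_self _ _), Finset.subset_insert _ _⟩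
    · rw [Finset.mem_filter] at hFm
      have h1 := hFm.1
      simp only [Mu, Finset.mem_filter] at h1
      exact Finset.mem_filter.2 ⟨h1.1, hFm.2⟩

lemma insert_u_not_mem_Mu_filter {p : Finset (Fin n)} :
    insert u p ∉ (K.Mu u).filter (fun F => p ⊆ F) := by
  simp [Mu, Finset.mem_filter]


lemma iFaces3_empty (hpure : K.IsPure 2) : K.iFaces 3 = ∅ := by
  by_contra h
  obtain ⟨F, hF⟩ := Finset.nonempty_of_ne_empty h
  have hFf : F ∈ K.faces := (mem_iFaces_iff.1 hF).1
  have hFc : F.card = 4 := (mem_iFaces_iff.1 hF).2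
  have hne : (K.faces.filter (fun G => F ⊆ G)).Nonempty :=
    ⟨F, Finset.mem_filter.2 ⟨hFf, subset_rfl⟩⟩
  obtain ⟨G, hG, hGmax⟩ := Finset.exists_max_image _ (fun G => G.card) hne
  rw [Finset.mem_filter] at hG
  have hmax : ∀ H ∈ K.faces, G ⊆ H → G = H := by
    intro H hH hGH
    have hFH : F ⊆ H := hG.2.trans hGH
    have hle := hGmax H (Finset.mem_filter.2 ⟨hH, hFH⟩)
    exact Finset.eq_of_subset_of_card_le hGH hle
  have h3 := hpure G hG.1 hmax
  have h4 : F.card ≤ G.card := Finset.card_le_card hG.2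
  omega

lemma boundaryRank3 (hpure : K.IsPure 2) : K.boundaryRank 3 = 0 := by
  have h3 : K.iFaces 3 = ∅ := iFaces3_empty hpure
  show (K.signedBoundary 2).rank = 0
  have h1 := Matrix.rank_le_card_width (K.signedBoundary 2)
  have hc : Fintype.card ↥(K.iFaces (2+1)) = 0 := by
    simp only [Fintype.card_coe]
    rw [show (2+1 : ℕ) = 3 from rfl, h3, Finset.card_empty]
  omega

/-- The sign of a codimension-one inclusion, matching `signedBoundary`. -/
def sgn (G T : Finset (Fin n)) : ℝ :=
  ∑ v ∈ T \ G, (-1 : ℝ) ^ ((T.filter (fun w => w < v)).card)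

lemma signedBoundary_apply (i : ℕ) (G : ↥(K.iFaces i)) (H : ↥(K.iFaces (i+1))) :
    K.signedBoundary i G H
      = if (G : Finset (Fin n)) ⊆ (H : Finset (Fin n)) then sgn (G : Finset (Fin n)) H else 0 :=
  rfl

lemma filter_lt_insert_self (a : Fin n) (G : Finset (Fin n)) :
    (insert a G).filter (fun w => w < a) = G.filter (fun w => w < a) := by
  rw [Finset.filter_insert, if_neg (lt_irrefl a)]

lemma insert_sdiff' {a : Fin n} {G : Finset (Fin n)} (ha : a ∉ G) :
    insert a G \ G = {a} := by
  ext z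
  simp only [Finset.mem_sdiff, Finset.mem_insert, Finset.mem_singleton]
  constructor
  · rintro ⟨h1 | h1, h2⟩
    · exact h1
    · exact absurd h1 h2
  · rintro rfl
    exact ⟨Or.inl rfl, ha⟩

lemma sgn_insert {a : Fin n} {G : Finset (Fin n)} (ha : a ∉ G) :
    sgn G (insert a G) = (-1 : ℝ) ^ ((G.filter (fun w => w < a)).card) := by
  unfold sgn
  rw [insert_sdiff' ha, Finset.sum_singleton, filter_lt_insert_self]

lemma sgn_insert_ne_zero {a : Fin n} {G : Finset (Fin n)} (ha : a ∉ G) :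
    sgn G (insert a G) ≠ 0 := by
  rw [sgn_insert ha]
  exact pow_ne_zero _ (by norm_num)

lemma sgn_key {G : Finset (Fin n)} {a b : Fin n} (ha : a ∉ G) (hb : b ∉ G) (hab : a ≠ b) :
    sgn G (insert a G) * sgn (insert a G) (insert a (insert b G))
    + sgn G (insert b G) * sgn (insert b G) (insert a (insert b G)) = 0 := by
  have hba : b ≠ a := hab.symm
  have haG : a ∉ insert b G := by simp [hab, ha]
  have hbG : b ∉ insert a G := by simp [hba, hb]
  have hcomm : insert a (insert b G) = insert b (insert a G) := Finset.insert_comm a b G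
  have e1 : sgn G (insert a G) = (-1 : ℝ) ^ ((G.filter (fun w => w < a)).card) := sgn_insert ha
  have e2 : sgn G (insert b G) = (-1 : ℝ) ^ ((G.filter (fun w => w < b)).card) := sgn_insert hb
  have e3 : sgn (insert a G) (insert a (insert b G))
      = (-1 : ℝ) ^ (((insert a G).filter (fun w => w < b)).card) := by
    rw [hcomm]; exact sgn_insert hbG
  have e4 : sgn (insert b G) (insert a (insert b G))
      = (-1 : ℝ) ^ (((insert b G).filter (fun w => w < a)).card) := sgn_insert haG
  have hafilt : a ∉ G.filter (fun w => w < b) := fun h => ha (Finset.mem_filter.1 h).1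
  have hbfilt : b ∉ G.filter (fun w => w < a) := fun h => hb (Finset.mem_filter.1 h).1
  rw [e1, e2, e3, e4]
  rcases lt_or_gt_of_ne hab with h | h
  · rw [Finset.filter_insert, if_pos h, Finset.card_insert_of_notMem hafilt,
      Finset.filter_insert, if_neg (asymm h)]
    rw [pow_succ]
    ring
  · rw [Finset.filter_insert, if_neg (asymm h), Finset.filter_insert, if_pos h,
      Finset.card_insert_of_notMem hbfilt]
    rw [pow_succ]
    ring

lemma mem_Mu_iff {F : Finset (Fin n)} : F ∈ K.Mu u ↔ F ∈ K.iFaces 2 ∧ u ∉ F := by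
  simp [Mu, Finset.mem_filter]

/-- The tetrahedron kernel vector attached to a face `F ∈ M_u`. -/
noncomputable def tetraVec (K : SimplicialComplex n) (u : Fin n) (F : Finset (Fin n)) :
    ↥(K.iFaces (1+1)) → ℝ :=
  fun H => if (H : Finset (Fin n)) ⊆ insert u F then sgn (H : Finset (Fin n)) (insert u F) else 0

lemma tetraVec_in_ker (hA : K.Apex u) {F : Finset (Fin n)} (hFMu : F ∈ K.Mu u) :
    (K.signedBoundary 1).mulVec (K.tetraVec u F) = 0 := by
  obtain ⟨hF2, huF⟩ := mem_Mu_iff.1 hFMu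
  have hFc : F.card = 3 := (mem_iFaces_iff.1 hF2).2
  set T : Finset (Fin n) := insert u F with hT
  have hTc : T.card = 4 := by rw [hT, Finset.card_insert_of_notMem huF, hFc]
  have hTerase : T.erase u = F := by rw [hT, Finset.erase_insert huF]
  funext G
  have hGc : (G : Finset (Fin n)).card = 2 := (mem_iFaces_iff.1 G.2).2
  show ∑ H : ↥(K.iFaces (1+1)), K.signedBoundary 1 G H * K.tetraVec u F H = (0:ℝ)
  have hterm : ∀ H : ↥(K.iFaces (1+1)), K.signedBoundary 1 G H * K.tetraVec u F H
      = (fun H' : Finset (Fin n) => if (G : Finset (Fin n)) ⊆ H' ∧ H' ⊆ T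
          then sgn (G : Finset (Fin n)) H' * sgn H' T else 0) (H : Finset (Fin n)) := by
    intro H
    rw [signedBoundary_apply]
    unfold tetraVec
    by_cases h1 : (G : Finset (Fin n)) ⊆ (H : Finset (Fin n)) <;>
      by_cases h2 : (H : Finset (Fin n)) ⊆ T <;> simp [h1, h2, ← hT]
  rw [Finset.sum_congr rfl (fun H _ => hterm H)]
  rw [Finset.univ_eq_attach, Finset.sum_attach (K.iFaces (1+1))
    (fun H' => if (G : Finset (Fin n)) ⊆ H' ∧ H' ⊆ T
      then sgn (G : Finset (Fin n)) H' * sgn H' T else 0),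
    ← Finset.sum_filter]
  -- now a sum over the filtered finset
  by_cases hGT : (G : Finset (Fin n)) ⊆ T
  · have hdc : (T \ (G : Finset (Fin n))).card = 2 := by
      rw [Finset.card_sdiff_of_subset hGT]; omega
    obtain ⟨a, b, hab, hd⟩ := Finset.card_eq_two.1 hdc
    have haT : a ∈ T \ (G : Finset (Fin n)) := by rw [hd]; simp
    have hbT : b ∈ T \ (G : Finset (Fin n)) := by rw [hd]; simp
    rw [Finset.mem_sdiff] at haT hbT
    have hTeq : T = insert a (insert b (G : Finset (Fin n))) := by
      have h1 := Finset.union_sdiff_of_subset hGT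
      rw [hd] at h1
      rw [← h1]
      ext z
      simp only [Finset.mem_union, Finset.mem_insert, Finset.mem_singleton]
      tauto
    have hmem : ∀ c ∈ T \ (G : Finset (Fin n)), insert c (G : Finset (Fin n)) ∈ K.iFaces 2 := by
      intro c hc
      rw [Finset.mem_sdiff] at hc
      have hcard : (insert c (G : Finset (Fin n))).card = 3 := by
        rw [Finset.card_insert_of_notMem hc.2, hGc]
      by_cases huH : u ∈ insert c (G : Finset (Fin n))
      · exact triple_mem hA hcard huH
      · have hsub : insert c (G : Finset (Fin n)) ⊆ F := by
          rw [← hTerase]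
          intro z hz
          rw [Finset.mem_erase]
          refine ⟨fun h => huH (h ▸ hz), ?_⟩
          rcases Finset.mem_insert.1 hz with rfl | hz'
          · exact hc.1
          · exact hGT hz'
        rw [Finset.eq_of_subset_of_card_le hsub (by omega)]
        exact hF2
    have hfilt : (K.iFaces 2).filter (fun H => (G : Finset (Fin n)) ⊆ H ∧ H ⊆ T)
        = {insert a (G : Finset (Fin n)), insert b (G : Finset (Fin n))} := by
      ext H
      simp only [Finset.mem_filter, Finset.mem_insert, Finset.mem_singleton]
      constructor
      · rintro ⟨hH2, hGH, hHT⟩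
        have hHc : H.card = 3 := (mem_iFaces_iff.1 hH2).2
        have hd1 : (H \ (G : Finset (Fin n))).card = 1 := by
          rw [Finset.card_sdiff_of_subset hGH]; omega
        obtain ⟨c, hc⟩ := Finset.card_eq_one.1 hd1
        have hcH : c ∈ H \ (G : Finset (Fin n)) := by rw [hc]; simp
        have hcT : c ∈ T \ (G : Finset (Fin n)) := by
          rw [Finset.mem_sdiff] at hcH ⊢
          exact ⟨hHT hcH.1, hcH.2⟩
        have hHeq : H = insert c (G : Finset (Fin n)) := by
          have h1 := Finset.union_sdiff_of_subset hGH
          rw [hc] at h1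
          rw [← h1]
          ext z
          simp only [Finset.mem_union, Finset.mem_insert, Finset.mem_singleton]
          tauto
        rw [hd, Finset.mem_insert, Finset.mem_singleton] at hcT
        rcases hcT with rfl | rfl
        · exact Or.inl hHeq
        · exact Or.inr hHeq
      · rintro (rfl | rfl)
        · refine ⟨hmem a (Finset.mem_sdiff.2 haT), Finset.subset_insert _ _, ?_⟩
          exact Finset.insert_subset haT.1 hGT
        · refine ⟨hmem b (Finset.mem_sdiff.2 hbT), Finset.subset_insert _ _, ?_⟩
          exact Finset.insert_subset hbT.1 hGT
    rw [hfilt]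
    have hne : insert a (G : Finset (Fin n)) ≠ insert b (G : Finset (Fin n)) := by
      intro h
      have : a ∈ insert b (G : Finset (Fin n)) := h ▸ Finset.mem_insert_self a _
      rcases Finset.mem_insert.1 this with h' | h'
      · exact hab h'
      · exact haT.2 h'
    rw [Finset.sum_insert (by simpa using hne), Finset.sum_singleton]
    have := sgn_key haT.2 hbT.2 hab
    rw [← hTeq] at this
    exact this
  · rw [Finset.filter_eq_empty_iff.2, Finset.sum_empty]
    intro H _
    rw [not_and]
    intro hGH hHT
    exact hGT (hGH.trans hHT)

lemma Mu_card_le_two (hA : K.Apex u) (hpure : K.IsPure 2) (hbetti : K.betti 2 = 2) :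
    (K.Mu u).card ≤ 2 := by
  classical
  set L := (K.signedBoundary 1).mulVecLin with hL
  have hrank : (K.signedBoundary 1).rank = Module.finrank ℝ (LinearMap.range L) := rfl
  have hrn := LinearMap.finrank_range_add_finrank_ker L
  have hdom : Module.finrank ℝ (↥(K.iFaces (1+1)) → ℝ) = (K.iFaces 2).card := by
    rw [Module.finrank_pi, Fintype.card_coe]
  have hrle := Matrix.rank_le_card_width (K.signedBoundary 1)
  rw [Fintype.card_coe] at hrle
  have hb3 : K.boundaryRank 3 = 0 := boundaryRank3 hpure
  have hb2 : K.boundaryRank 2 = (K.signedBoundary 1).rank := rfl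
  have hbetti' : (K.iFaces 2).card - (K.signedBoundary 1).rank = 2 := by
    have : K.betti 2 = ((K.iFaces 2).card - K.boundaryRank 2) - K.boundaryRank 3 := rfl
    rw [this, hb3, hb2] at hbetti
    omega
  have hker : Module.finrank ℝ (LinearMap.ker L) = 2 := by
    rw [hdom] at hrn
    rw [← hrank] at hrn
    omega
  -- family of kernel vectors
  have hcard : Fintype.card ↥(K.Mu u) ≤ 2 := by
    rw [← hker]
    refine LinearIndependent.fintype_card_le_finrank (b := fun F : ↥(K.Mu u) =>
      (⟨K.tetraVec u (F : Finset (Fin n)),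
        LinearMap.mem_ker.2 (tetraVec_in_ker hA F.2)⟩ : ↥(LinearMap.ker L))) ?_
    rw [Fintype.linearIndependent_iff]
    intro g hg F0
    have h2 : (∑ F : ↥(K.Mu u), g F • K.tetraVec u (F : Finset (Fin n))) = 0 := by
      have h3 := congrArg Subtype.val hg
      rw [AddSubmonoidClass.coe_finset_sum] at h3
      simpa using h3
    obtain ⟨hF02, huF0⟩ := mem_Mu_iff.1 F0.2
    have hF0c : (F0 : Finset (Fin n)).card = 3 := (mem_iFaces_iff.1 hF02).2
    have hcoord := congrFun h2 (⟨(F0 : Finset (Fin n)), hF02⟩ : ↥(K.iFaces (1+1)))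
    rw [Finset.sum_apply, Pi.zero_apply] at hcoord
    have hsingle : ∀ F : ↥(K.Mu u), F ≠ F0 →
        (g F • K.tetraVec u (F : Finset (Fin n))) ⟨(F0 : Finset (Fin n)), hF02⟩ = 0 := by
      intro F hF
      obtain ⟨hFf2, huFf⟩ := mem_Mu_iff.1 F.2
      have hFfc : (F : Finset (Fin n)).card = 3 := (mem_iFaces_iff.1 hFf2).2
      have : K.tetraVec u (F : Finset (Fin n)) ⟨(F0 : Finset (Fin n)), hF02⟩ = 0 := by
        unfold tetraVec
        rw [if_neg]
        intro hsub
        have hsub2 : (F0 : Finset (Fin n)) ⊆ (F : Finset (Fin n)) := by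
          intro z hz
          rcases Finset.mem_insert.1 (hsub hz) with rfl | h
          · exact absurd hz huF0
          · exact h
        exact hF (Subtype.ext ((Finset.eq_of_subset_of_card_le hsub2 (by omega)).symm))
      rw [Pi.smul_apply, this, smul_zero]
    rw [Fintype.sum_eq_single F0 hsingle] at hcoord
    rw [Pi.smul_apply] at hcoord
    have htv : K.tetraVec u (F0 : Finset (Fin n)) ⟨(F0 : Finset (Fin n)), hF02⟩ ≠ 0 := by
      unfold tetraVec
      rw [if_pos (Finset.subset_insert _ _)]
      exact sgn_insert_ne_zero huF0
    have := mul_eq_zero.1 hcoord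
    rcases this with h | h
    · exact h
    · exact absurd h htv
  rw [Fintype.card_coe] at hcard
  exact hcard


lemma E1 {q : ℝ} {f : ↥(K.iFaces 1) → ℝ} (hA : K.Apex u) (hn : 4 ≤ n)
    (hf : (K.Qup 1).mulVec f = q • f) {x : Fin n} (hx : x ≠ u) :
    q * K.bSum 1 f {u, x}
      = ∑ y ∈ (({u} : Finset (Fin n))ᶜ).erase x, K.bSum 1 f {u, x, y} := by
  have hp : ({u, x} : Finset (Fin n)) ∈ K.iFaces 1 :=
    pair_mem hA hn (Finset.card_pair (Ne.symm hx))
  rw [eigen_eq hf hp, filter_u_pair hA hx]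
  rw [Finset.sum_image]
  intro y1 h1 y2 h2 heq
  have h1' := Finset.mem_erase.1 h1
  have hy1 : y1 ∈ ({u, x, y2} : Finset (Fin n)) := by rw [← show ({u, x, y1} : Finset (Fin n)) = {u, x, y2} from heq]; simp
  simp only [Finset.mem_insert, Finset.mem_singleton] at hy1
  rcases hy1 with h | h | h
  · exact absurd h (by simpa [Finset.mem_compl] using h1'.2)
  · exact absurd h h1'.1
  · exact h

lemma E2 {q : ℝ} {f : ↥(K.iFaces 1) → ℝ} (hA : K.Apex u) (hn : 4 ≤ n)
    (hf : (K.Qup 1).mulVec f = q • f) {x y : Fin n} (hx : x ≠ u) (hy : y ≠ u) (hxy : x ≠ y) :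
    q * K.bSum 1 f {x, y}
      = K.bSum 1 f {u, x, y}
        + ∑ F ∈ K.Mu u, (if ({x, y} : Finset (Fin n)) ⊆ F then K.bSum 1 f F else 0) := by
  have hcp : ({x, y} : Finset (Fin n)).card = 2 := Finset.card_pair hxy
  have hup : u ∉ ({x, y} : Finset (Fin n)) := by
    simp only [Finset.mem_insert, Finset.mem_singleton]
    rintro (rfl | rfl)
    · exact hx rfl
    · exact hy rfl
  have hp : ({x, y} : Finset (Fin n)) ∈ K.iFaces 1 := pair_mem hA hn hcp
  rw [eigen_eq hf hp, filter_nonu_pair hA hcp hup,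
    Finset.sum_insert insert_u_not_mem_Mu_filter, ← Finset.sum_filter]


lemma triple_card_distinct {a b c : Fin n} (h : ({a, b, c} : Finset (Fin n)).card = 3) :
    a ≠ b ∧ a ≠ c ∧ b ≠ c := by
  refine ⟨?_, ?_, ?_⟩ <;> rintro rfl
  · rw [Finset.insert_idem] at h
    have := Finset.card_insert_le a ({c} : Finset (Fin n))
    rw [Finset.card_singleton] at this
    omega
  · rw [Finset.insert_comm, Finset.insert_eq_self.2 (Finset.mem_singleton_self a)] at h
    have := Finset.card_insert_le b ({a} : Finset (Fin n))
    rw [Finset.card_singleton] at this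
    omega
  · rw [Finset.insert_eq_self.2 (Finset.mem_singleton_self b)] at h
    have := Finset.card_insert_le a ({b} : Finset (Fin n))
    rw [Finset.card_singleton] at this
    omega

end SimplicialComplex

end Aux

set_option maxHeartbeats 2000000 in
/-- under the Setup with `t = 2` plus the Apex assumption, for large `n`:
for every vertex `x ≠ u`, `| f({u,x}) − 1/2 + 1/(4n) | ≤ C/n²`. -/
theorem stmt19 :
    ∃ (C : ℝ) (N : ℕ), ∀ n, N ≤ n → ∀ (K : SimplicialComplex n) (f : ↥(K.iFaces 1) → ℝ)
      (u v w : Fin n), Setup n 2 K f u v w → K.Apex u →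
      ∀ x : Fin n, x ≠ u → ∀ h : ({u,x} : Finset (Fin n)) ∈ K.iFaces 1,
        |f ⟨{u,x}, h⟩ - 1/2 + 1/(4*(n:ℝ))| ≤ C/(n:ℝ)^2 := by
  refine ⟨100, 30, ?_⟩
  intro n hn K f u v w hSetup hApex x hxu h
  obtain ⟨hKfam, hmax, hfne, hfnn, heig, hF0, hble, hF0eq, hlab1, hlab2⟩ := hSetup
  obtain ⟨hpure, hbetti⟩ := hKfam
  have hn4 : 4 ≤ n := by omega
  have hnR : (30 : ℝ) ≤ (n : ℝ) := by exact_mod_cast hn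
  have hnR0 : (0:ℝ) < (n:ℝ) := by linarith
  set q : ℝ := K.specRad 1 with hq
  set φ : Finset (Fin n) → ℝ := K.bSum 1 f with hphi
  have hcF0 : ({u, v, w} : Finset (Fin n)).card = 3 := (mem_iFaces_iff.1 hF0).2
  obtain ⟨huv, huw, hvw⟩ := triple_card_distinct hcF0
  set V : Finset (Fin n) := ({u} : Finset (Fin n))ᶜ with hV
  have hVmem : ∀ y : Fin n, y ∈ V ↔ y ≠ u := by intro y; rw [hV]; simp
  have h1n : 1 ≤ n := by omega
  have hVcard : (V.card : ℝ) = (n : ℝ) - 1 := by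
    rw [hV, Finset.card_compl, Finset.card_singleton, Fintype.card_fin, Nat.cast_sub h1n,
      Nat.cast_one]
  have hVec : ∀ x' ∈ V, (V.erase x').card = n - 2 := by
    intro x' hx'
    rw [Finset.card_erase_of_mem hx', hV, Finset.card_compl, Finset.card_singleton,
      Fintype.card_fin]
    omega
  have hVecR : ∀ x' ∈ V, ((V.erase x').card : ℝ) = (n:ℝ) - 2 := by
    intro x' hx'
    rw [hVec x' hx', Nat.cast_sub (by omega)]
    norm_num
  have hvV : v ∈ V := (hVmem v).2 (Ne.symm huv)
  have hwV : w ∈ V := (hVmem w).2 (Ne.symm huw)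
  have hxV : x ∈ V := (hVmem x).2 hxu
  have hφ0 : ∀ Fb : Finset (Fin n), 0 ≤ φ Fb := by
    intro Fb
    rw [hphi]
    unfold bSum
    refine Finset.sum_nonneg fun e' _ => ?_
    by_cases h' : (e' : Finset (Fin n)) ⊆ Fb
    · simpa [h'] using hfnn e'
    · simp [h']
  have hface1 : ∀ F ∈ K.iFaces 2, φ F ≤ 1 := by intro F hF; rw [hphi]; exact hble F hF
  have htri : ∀ a b c : Fin n, a ≠ b → a ≠ c → b ≠ c →
      φ {a, b, c} = φ {a, b} + φ {a, c} + φ {b, c} := by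
    intro a b c h1 h2 h3; rw [hphi]; exact bSum_triple hApex hn4 h1 h2 h3
  have htrif : ∀ a b : Fin n, a ∈ V → b ∈ V → a ≠ b →
      ({u, a, b} : Finset (Fin n)) ∈ K.iFaces 2 := by
    intro a b ha hb hab
    exact triple_mem hApex
      (card_triple (Ne.symm ((hVmem a).1 ha)) (Ne.symm ((hVmem b).1 hb)) hab) (by simp)
  have hφt1 : ∀ a b : Fin n, a ∈ V → b ∈ V → a ≠ b → φ {u, a, b} ≤ 1 :=
    fun a b ha hb hab => hface1 _ (htrif a b ha hb hab)
  have he1 : ∀ y ∈ V, φ {u, y} ≤ 1 := by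
    intro y hy
    have hnz : (V.erase y).Nonempty := by
      rw [← Finset.card_pos, hVec y hy]; omega
    obtain ⟨z, hz⟩ := hnz
    obtain ⟨hzy, hzV⟩ := Finset.mem_erase.1 hz
    have h1 := hφt1 y z hy hzV (Ne.symm hzy)
    rw [htri u y z (Ne.symm ((hVmem y).1 hy)) (Ne.symm ((hVmem z).1 hzV)) (Ne.symm hzy)] at h1
    linarith [hφ0 {u, z}, hφ0 {y, z}]
  have hMc : ((K.Mu u).card : ℝ) ≤ 2 := by
    exact_mod_cast Mu_card_le_two hApex hpure hbetti
  have hMuF : ∀ F ∈ K.Mu u, F ∈ K.iFaces 2 ∧ F.card = 3 ∧ u ∉ F := by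
    intro F hF
    obtain ⟨h1, h2⟩ := mem_Mu_iff.1 hF
    exact ⟨h1, (mem_iFaces_iff.1 h1).2, h2⟩
  have heps0 : ∀ a b : Fin n,
      0 ≤ ∑ F ∈ K.Mu u, (if ({a, b} : Finset (Fin n)) ⊆ F then φ F else 0) := by
    intro a b
    refine Finset.sum_nonneg fun F _ => ?_
    by_cases h' : ({a, b} : Finset (Fin n)) ⊆ F
    · simpa [h'] using hφ0 F
    · simp [h']
  have heps2 : ∀ a b : Fin n,
      (∑ F ∈ K.Mu u, (if ({a, b} : Finset (Fin n)) ⊆ F then φ F else 0)) ≤ 2 := by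
    intro a b
    calc (∑ F ∈ K.Mu u, (if ({a, b} : Finset (Fin n)) ⊆ F then φ F else 0))
        ≤ ∑ _F ∈ K.Mu u, (1:ℝ) := by
          refine Finset.sum_le_sum fun F hF => ?_
          by_cases h' : ({a, b} : Finset (Fin n)) ⊆ F
          · rw [if_pos h']; exact hface1 F (hMuF F hF).1
          · rw [if_neg h']; norm_num
      _ = ((K.Mu u).card : ℝ) := by rw [Finset.sum_const, nsmul_eq_mul, mul_one]
      _ ≤ 2 := hMc
  have hcnt : ∀ F ∈ K.Mu u, ∀ x' : Fin n,
      (∑ z ∈ V.erase x', if ({x', z} : Finset (Fin n)) ⊆ F then φ F else 0)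
        ≤ (if x' ∈ F then 3 * φ F else 0) := by
    intro F hF x'
    obtain ⟨hF2, hFc, huF⟩ := hMuF F hF
    by_cases hxF : x' ∈ F
    · rw [if_pos hxF, ← Finset.sum_filter]
      have hsub : (V.erase x').filter (fun z => ({x', z} : Finset (Fin n)) ⊆ F) ⊆ F := by
        intro z hz
        exact (Finset.mem_filter.1 hz).2 (by simp)
      calc ∑ _z ∈ (V.erase x').filter (fun z => ({x', z} : Finset (Fin n)) ⊆ F), φ F
          = (((V.erase x').filter (fun z => ({x', z} : Finset (Fin n)) ⊆ F)).card : ℝ) * φ F := by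
            rw [Finset.sum_const, nsmul_eq_mul]
        _ ≤ 3 * φ F := by
            have hc3 : ((V.erase x').filter (fun z => ({x', z} : Finset (Fin n)) ⊆ F)).card ≤ 3 :=
              le_trans (Finset.card_le_card hsub) (le_of_eq hFc)
            exact mul_le_mul_of_nonneg_right (by exact_mod_cast hc3) (hφ0 F)
    · rw [if_neg hxF]
      refine le_of_eq (Finset.sum_eq_zero fun z hz => ?_)
      rw [if_neg]
      intro hsub
      exact hxF (hsub (by simp))
  have hcnt' : ∀ F ∈ K.Mu u, ∀ x' : Fin n,
      (∑ z ∈ V.erase x', if ({x', z} : Finset (Fin n)) ⊆ F then φ F else 0) ≤ 3 * φ F := by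
    intro F hF x'
    refine le_trans (hcnt F hF x') ?_
    by_cases hxF : x' ∈ F
    · rw [if_pos hxF]
    · rw [if_neg hxF]
      have := hφ0 F
      linarith
  have hEx6 : ∀ x' : Fin n,
      (∑ z ∈ V.erase x', ∑ F ∈ K.Mu u,
        (if ({x', z} : Finset (Fin n)) ⊆ F then φ F else 0)) ≤ 6 := by
    intro x'
    rw [Finset.sum_comm]
    calc (∑ F ∈ K.Mu u, ∑ z ∈ V.erase x',
          (if ({x', z} : Finset (Fin n)) ⊆ F then φ F else 0))
        ≤ ∑ F ∈ K.Mu u, (3:ℝ) := by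
          refine Finset.sum_le_sum fun F hF => ?_
          refine le_trans (hcnt' F hF x') ?_
          have := hface1 F (hMuF F hF).1
          linarith
      _ = 3 * ((K.Mu u).card : ℝ) := by rw [Finset.sum_const, nsmul_eq_mul, mul_comm]
      _ ≤ 6 := by linarith
  have hEx0 : ∀ x' : Fin n,
      0 ≤ ∑ z ∈ V.erase x', ∑ F ∈ K.Mu u,
        (if ({x', z} : Finset (Fin n)) ⊆ F then φ F else 0) :=
    fun x' => Finset.sum_nonneg fun z _ => heps0 x' z
  have hperF : ∀ F ∈ K.Mu u,
      (∑ x' ∈ V, ∑ z ∈ V.erase x',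
        (if ({x', z} : Finset (Fin n)) ⊆ F then φ F else 0)) ≤ 9 := by
    intro F hF
    obtain ⟨hF2, hFc, huF⟩ := hMuF F hF
    have hb1 : ∀ x' ∈ V,
        (∑ z ∈ V.erase x', (if ({x', z} : Finset (Fin n)) ⊆ F then φ F else 0))
          ≤ (if x' ∈ F then 3 * φ F else 0) := fun x' _ => hcnt F hF x'
    calc (∑ x' ∈ V, ∑ z ∈ V.erase x',
          (if ({x', z} : Finset (Fin n)) ⊆ F then φ F else 0))
        ≤ ∑ x' ∈ V, (if x' ∈ F then 3 * φ F else 0) := Finset.sum_le_sum hb1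
      _ = ∑ _x' ∈ V.filter (fun x' => x' ∈ F), (3 * φ F) := by rw [Finset.sum_filter]
      _ = ((V.filter (fun x' => x' ∈ F)).card : ℝ) * (3 * φ F) := by
          rw [Finset.sum_const, nsmul_eq_mul]
      _ ≤ 3 * (3 * φ F) := by
          have hsub : V.filter (fun x' => x' ∈ F) ⊆ F := fun z hz => (Finset.mem_filter.1 hz).2
          have hc3 : (V.filter (fun x' => x' ∈ F)).card ≤ 3 :=
            le_trans (Finset.card_le_card hsub) (le_of_eq hFc)
          exact mul_le_mul_of_nonneg_right (by exact_mod_cast hc3)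
            (by have := hφ0 F; linarith)
      _ ≤ 9 := by have := hface1 F hF2; have := hφ0 F; linarith
  have hSE : (∑ x' ∈ V, ∑ z ∈ V.erase x', ∑ F ∈ K.Mu u,
      (if ({x', z} : Finset (Fin n)) ⊆ F then φ F else 0)) ≤ 18 := by
    have hswap : ∀ x' : Fin n,
        (∑ z ∈ V.erase x', ∑ F ∈ K.Mu u,
          (if ({x', z} : Finset (Fin n)) ⊆ F then φ F else 0))
        = ∑ F ∈ K.Mu u, ∑ z ∈ V.erase x',
          (if ({x', z} : Finset (Fin n)) ⊆ F then φ F else 0) := fun x' => Finset.sum_comm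
    rw [Finset.sum_congr rfl (fun x' _ => hswap x'), Finset.sum_comm]
    calc (∑ F ∈ K.Mu u, ∑ x' ∈ V, ∑ z ∈ V.erase x',
          (if ({x', z} : Finset (Fin n)) ⊆ F then φ F else 0))
        ≤ ∑ F ∈ K.Mu u, (9:ℝ) := Finset.sum_le_sum hperF
      _ = 9 * ((K.Mu u).card : ℝ) := by rw [Finset.sum_const, nsmul_eq_mul, mul_comm]
      _ ≤ 18 := by linarith
  -- eigen equations
  have hE1' : ∀ x' ∈ V, q * φ {u, x'}
      = ((n:ℝ) - 2) * φ {u, x'} + ((∑ y ∈ V, φ {u, y}) - φ {u, x'})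
        + ∑ z ∈ V.erase x', φ {x', z} := by
    intro x' hx'
    have hx'u : x' ≠ u := (hVmem x').1 hx'
    have h0 := E1 hApex hn4 heig hx'u
    rw [← hphi, ← hV] at h0
    have h1 : (∑ y ∈ V.erase x', φ {u, x', y})
        = ∑ y ∈ V.erase x', (φ {u, x'} + φ {u, y} + φ {x', y}) := by
      refine Finset.sum_congr rfl fun y hy => ?_
      obtain ⟨hyx, hyV⟩ := Finset.mem_erase.1 hy
      exact htri u x' y (Ne.symm hx'u) (Ne.symm ((hVmem y).1 hyV)) (Ne.symm hyx)
    rw [h1, Finset.sum_add_distrib, Finset.sum_add_distrib, Finset.sum_const, nsmul_eq_mul,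
      hVecR x' hx', Finset.sum_erase_eq_sub hx'] at h0
    exact h0
  have hE2' : ∀ x' ∈ V, ∀ z ∈ V.erase x', q * φ {x', z}
      = φ {u, x'} + φ {u, z} + φ {x', z}
        + ∑ F ∈ K.Mu u, (if ({x', z} : Finset (Fin n)) ⊆ F then φ F else 0) := by
    intro x' hx' z hz
    obtain ⟨hzx, hzV⟩ := Finset.mem_erase.1 hz
    have hx'u : x' ≠ u := (hVmem x').1 hx'
    have hzu : z ≠ u := (hVmem z).1 hzV
    have h0 := E2 hApex hn4 heig hx'u hzu (Ne.symm hzx)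
    rw [← hphi] at h0
    rw [htri u x' z (Ne.symm hx'u) (Ne.symm hzu) (Ne.symm hzx)] at h0
    linarith [h0]
  have hE2s : ∀ x' ∈ V, q * (∑ z ∈ V.erase x', φ {x', z})
      = ((n:ℝ) - 2) * φ {u, x'} + ((∑ y ∈ V, φ {u, y}) - φ {u, x'})
        + (∑ z ∈ V.erase x', φ {x', z})
        + ∑ z ∈ V.erase x', ∑ F ∈ K.Mu u,
            (if ({x', z} : Finset (Fin n)) ⊆ F then φ F else 0) := by
    intro x' hx'
    rw [Finset.mul_sum, Finset.sum_congr rfl (fun z hz => hE2' x' hx' z hz),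
      Finset.sum_add_distrib, Finset.sum_add_distrib, Finset.sum_add_distrib,
      Finset.sum_const, nsmul_eq_mul, hVecR x' hx', Finset.sum_erase_eq_sub hx']
  have hqS : q * (∑ y ∈ V, φ {u, y})
      = (2*(n:ℝ) - 4) * (∑ y ∈ V, φ {u, y})
        + ∑ x' ∈ V, ∑ z ∈ V.erase x', φ {x', z} := by
    rw [Finset.mul_sum, Finset.sum_congr rfl (fun x' hx' => hE1' x' hx'),
      Finset.sum_add_distrib, Finset.sum_add_distrib, ← Finset.mul_sum,
      Finset.sum_sub_distrib, Finset.sum_const, nsmul_eq_mul, hVcard]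
    ring
  have hqG : q * (∑ x' ∈ V, ∑ z ∈ V.erase x', φ {x', z})
      = (2*(n:ℝ) - 4) * (∑ y ∈ V, φ {u, y})
        + (∑ x' ∈ V, ∑ z ∈ V.erase x', φ {x', z})
        + ∑ x' ∈ V, ∑ z ∈ V.erase x', ∑ F ∈ K.Mu u,
            (if ({x', z} : Finset (Fin n)) ⊆ F then φ F else 0) := by
    rw [Finset.mul_sum, Finset.sum_congr rfl (fun x' hx' => hE2s x' hx'),
      Finset.sum_add_distrib, Finset.sum_add_distrib, Finset.sum_add_distrib, ← Finset.mul_sum,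
      Finset.sum_sub_distrib, Finset.sum_const, nsmul_eq_mul, hVcard]
    ring
  -- scalar names
  obtain ⟨S, hSd⟩ : ∃ t : ℝ, t = ∑ y ∈ V, φ {u, y} := ⟨_, rfl⟩
  obtain ⟨SG, hSGd⟩ : ∃ t : ℝ, t = ∑ x' ∈ V, ∑ z ∈ V.erase x', φ {x', z} := ⟨_, rfl⟩
  obtain ⟨SE, hSEd⟩ : ∃ t : ℝ, t = ∑ x' ∈ V, ∑ z ∈ V.erase x', ∑ F ∈ K.Mu u,
      (if ({x', z} : Finset (Fin n)) ⊆ F then φ F else 0) := ⟨_, rfl⟩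
  rw [← hSd, ← hSGd] at hqS
  rw [← hSd, ← hSGd, ← hSEd] at hqG
  rw [← hSEd] at hSE
  have hS0 : 0 ≤ S := hSd ▸ Finset.sum_nonneg fun y _ => hφ0 {u, y}
  have hSG0 : 0 ≤ SG := hSGd ▸ Finset.sum_nonneg fun x' _ =>
    Finset.sum_nonneg fun z _ => hφ0 {x', z}
  have hSE0 : 0 ≤ SE := hSEd ▸ Finset.sum_nonneg fun x' _ => hEx0 x'
  have hφF0 : φ {u, v, w} = 1 := by rw [hphi]; exact hF0eq
  have hvw_eq : φ {v, w} = 1 - φ {u, v} - φ {u, w} := by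
    rw [htri u v w huv huw hvw] at hφF0
    linarith
  have hwVe : w ∈ V.erase v := Finset.mem_erase.2 ⟨Ne.symm hvw, hwV⟩
  have hSpos : 0 < S := by
    rcases lt_or_eq_of_le hS0 with h' | h'
    · exact h'
    have hS00 : S = 0 := h'.symm
    have hzero : ∀ y ∈ V, φ {u, y} = 0 := by
      intro y hy
      exact (Finset.sum_eq_zero_iff_of_nonneg (fun y' _ => hφ0 {u, y'})).1
        (by rw [← hSd, hS00]) y hy
    have h1 := hE1' v hvV
    rw [hzero v hvV, ← hSd, hS00] at h1
    have hGv : (∑ z ∈ V.erase v, φ {v, z}) = 0 := by linarith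
    have hvw0 := (Finset.sum_eq_zero_iff_of_nonneg (fun z _ => hφ0 {v, z})).1 hGv w hwVe
    rw [hvw_eq, hzero v hvV, hzero w hwV] at hvw0
    norm_num at hvw0
  have hqlow : 2*(n:ℝ) - 4 ≤ q := by
    by_contra hc
    push_neg at hc
    have h1 : (q - (2*(n:ℝ) - 4)) * S < 0 := mul_neg_of_neg_of_pos (by linarith) hSpos
    nlinarith [hqS, hSG0]
  have hq0 : 0 < q := by linarith
  have hq55 : (55:ℝ) ≤ q - 1 := by linarith
  -- S ≥ 1/2
  have hE2vw := hE2' v hvV w hwVe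
  obtain ⟨eps, hepsd⟩ : ∃ t : ℝ,
      t = ∑ F ∈ K.Mu u, (if ({v, w} : Finset (Fin n)) ⊆ F then φ F else 0) := ⟨_, rfl⟩
  rw [← hepsd] at hE2vw
  have heps0' : 0 ≤ eps := hepsd ▸ heps0 v w
  have heps2' : eps ≤ 2 := hepsd ▸ heps2 v w
  have hvwle : (q - 1) * φ {v, w} ≤ 4 := by
    have h1 := he1 v hvV
    have h2 := he1 w hwV
    nlinarith [hE2vw]
  have hφvw0 : 0 ≤ φ {v, w} := hφ0 {v, w}
  have hvwsmall : φ {v, w} ≤ 4 / 55 := by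
    rw [le_div_iff₀ (by norm_num : (0:ℝ) < 55)]
    nlinarith [hvwle, mul_le_mul_of_nonneg_right hq55 hφvw0]
  have hSvw : φ {u, v} + φ {u, w} ≤ S := by
    rw [hSd]
    have hsub : ({v, w} : Finset (Fin n)) ⊆ V := by
      intro z hz
      rcases Finset.mem_insert.1 hz with rfl | hz'
      · exact hvV
      · rw [Finset.mem_singleton] at hz'
        exact hz' ▸ hwV
    calc φ {u, v} + φ {u, w} = ∑ y ∈ ({v, w} : Finset (Fin n)), φ {u, y} := by
          rw [Finset.sum_pair hvw]
      _ ≤ ∑ y ∈ V, φ {u, y} :=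
          Finset.sum_le_sum_of_subset_of_nonneg hsub fun y _ _ => hφ0 {u, y}
  have hShalf : (1:ℝ)/2 ≤ S := by
    have : (1:ℝ)/2 ≤ φ {u, v} + φ {u, w} := by
      rw [hvw_eq] at hvwsmall
      linarith
    linarith
  -- q upper bound
  clear hcnt hcnt' hperF hmax hfne hlab1 hlab2 hble hF0eq
  have hkeyq : (q - 1) * (q - 2*(n:ℝ) + 4) * S = (2*(n:ℝ) - 4) * S + SE := by
    linear_combination (q - 1) * hqS + hqG
  have h36 : SE ≤ 36 * S := by linarith
  have h2q : (q - 1) * (q - 2*(n:ℝ) + 4) * S ≤ (2*(n:ℝ) + 32) * S := by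
    linarith [hkeyq, h36]
  have h3q : (q - 1) * (q - 2*(n:ℝ) + 4) ≤ 2*(n:ℝ) + 32 := by
    by_contra hgt
    push_neg at hgt
    have hpos := mul_pos (sub_pos.2 hgt) hSpos
    nlinarith [h2q]
  have hqhigh : q ≤ 2*(n:ℝ) - 2 := by
    by_contra hc
    push_neg at hc
    have hf1 : (2*(n:ℝ) - 3) * (q - 2*(n:ℝ) + 4) ≤ (q - 1) * (q - 2*(n:ℝ) + 4) :=
      mul_le_mul_of_nonneg_right (by linarith) (by linarith)
    have hf2 : (2*(n:ℝ) - 3) * 2 < (2*(n:ℝ) - 3) * (q - 2*(n:ℝ) + 4) :=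
      mul_lt_mul_of_pos_left (by linarith) (by linarith)
    linarith [h3q]
  -- per-vertex equation
  have hDe : ∀ x' ∈ V, ((q - (n:ℝ) + 3) * (q - 1) - ((n:ℝ) - 3)) * φ {u, x'}
      = q * S + ∑ z ∈ V.erase x', ∑ F ∈ K.Mu u,
          (if ({x', z} : Finset (Fin n)) ⊆ F then φ F else 0) := by
    intro x' hx'
    have h1 := hE1' x' hx'
    have h2 := hE2s x' hx'
    rw [← hSd] at h1 h2
    linear_combination (q - 1) * h1 + h2
  clear hE2s hE1'
  -- D bounds
  have hD1 : (n:ℝ)^2 ≤ (q - (n:ℝ) + 3) * (q - 1) - ((n:ℝ) - 3) := by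
    have hq1 : (n:ℝ) - 1 ≤ q - (n:ℝ) + 3 := by linarith
    have hq2 : 2*(n:ℝ) - 5 ≤ q - 1 := by linarith
    have hp : ((n:ℝ) - 1) * (2*(n:ℝ) - 5) ≤ (q - (n:ℝ) + 3) * (q - 1) :=
      mul_le_mul hq1 hq2 (by linarith) (by linarith)
    nlinarith [hp, hnR]
  have hDpos : 0 < (q - (n:ℝ) + 3) * (q - 1) - ((n:ℝ) - 3) :=
    lt_of_lt_of_le (by positivity) hD1
  -- (q-1) * eps ≤ 24
  have hφF12 : ∀ F ∈ K.Mu u, (q - 1) * φ F ≤ 12 := by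
    intro F hF
    obtain ⟨hF2, hFc, huF⟩ := hMuF F hF
    obtain ⟨a, b, c, hab, hac, hbc, rfl⟩ := Finset.card_eq_three.1 hFc
    have haV : a ∈ V := (hVmem a).2 (by rintro rfl; exact huF (by simp))
    have hbV : b ∈ V := (hVmem b).2 (by rintro rfl; exact huF (by simp))
    have hcV : c ∈ V := (hVmem c).2 (by rintro rfl; exact huF (by simp))
    have hpair : ∀ y z : Fin n, y ∈ V → z ∈ V → y ≠ z → (q - 1) * φ {y, z} ≤ 4 := by
      intro y z hy hz hyz
      have h1 := hE2' y hy z (Finset.mem_erase.2 ⟨Ne.symm hyz, hz⟩)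
      have h2 := he1 y hy
      have h3 := he1 z hz
      have h4 := heps2 y z
      have h5 := heps0 y z
      nlinarith [h1]
    rw [htri a b c hab hac hbc]
    have p1 := hpair a b haV hbV hab
    have p2 := hpair a c haV hcV hac
    have p3 := hpair b c hbV hcV hbc
    linarith
  have heps24 : (q - 1) * eps ≤ 24 := by
    rw [hepsd, Finset.mul_sum]
    calc (∑ F ∈ K.Mu u,
          (q - 1) * (if ({v, w} : Finset (Fin n)) ⊆ F then φ F else 0))
        ≤ ∑ _F ∈ K.Mu u, (12:ℝ) := by
          refine Finset.sum_le_sum fun F hF => ?_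
          by_cases h' : ({v, w} : Finset (Fin n)) ⊆ F
          · rw [if_pos h']; exact hφF12 F hF
          · rw [if_neg h', mul_zero]; norm_num
      _ = 12 * ((K.Mu u).card : ℝ) := by rw [Finset.sum_const, nsmul_eq_mul, mul_comm]
      _ ≤ 24 := by linarith
  -- named E-values
  obtain ⟨Ex, hExd⟩ : ∃ t : ℝ, t = ∑ z ∈ V.erase x, ∑ F ∈ K.Mu u,
      (if ({x, z} : Finset (Fin n)) ⊆ F then φ F else 0) := ⟨_, rfl⟩
  obtain ⟨Ev, hEvd⟩ : ∃ t : ℝ, t = ∑ z ∈ V.erase v, ∑ F ∈ K.Mu u,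
      (if ({v, z} : Finset (Fin n)) ⊆ F then φ F else 0) := ⟨_, rfl⟩
  obtain ⟨Ew, hEwd⟩ : ∃ t : ℝ, t = ∑ z ∈ V.erase w, ∑ F ∈ K.Mu u,
      (if ({w, z} : Finset (Fin n)) ⊆ F then φ F else 0) := ⟨_, rfl⟩
  have hDx := hDe x hxV
  have hDv := hDe v hvV
  have hDw := hDe w hwV
  rw [← hExd] at hDx
  rw [← hEvd] at hDv
  rw [← hEwd] at hDw
  have hEx0' : 0 ≤ Ex := hExd ▸ hEx0 x
  have hEv0' : 0 ≤ Ev := hEvd ▸ hEx0 v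
  have hEw0' : 0 ≤ Ew := hEwd ▸ hEx0 w
  have hEx6' : Ex ≤ 6 := hExd ▸ hEx6 x
  have hEv6' : Ev ≤ 6 := hEvd ▸ hEx6 v
  have hEw6' : Ew ≤ 6 := hEwd ▸ hEx6 w
  -- sum equation for v,w
  have hsum : q * (φ {u, v} + φ {u, w}) = q - 1 - eps := by
    linear_combination (-1) * hE2vw + (q - 1) * hvw_eq
  -- final assembly
  have hfa : f ⟨{u, x}, h⟩ = φ {u, x} := by rw [hphi]; exact (bSum_pair h).symm
  rw [hfa, le_div_iff₀ (by positivity : (0:ℝ) < (n:ℝ)^2)]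
  obtain ⟨t1, ht1d⟩ : ∃ t : ℝ, t = φ {u, x} - (φ {u, v} + φ {u, w})/2 := ⟨_, rfl⟩
  obtain ⟨t3, ht3d⟩ : ∃ t : ℝ, t = (φ {u, v} + φ {u, w})/2 - 1/2 + 1/(4*(n:ℝ)) := ⟨_, rfl⟩
  have hsplit : φ {u, x} - 1/2 + 1/(4*(n:ℝ)) = t1 + t3 := by rw [ht1d, ht3d]; ring
  have hkey1 : 2 * ((q - (n:ℝ) + 3) * (q - 1) - ((n:ℝ) - 3)) * t1 = 2*Ex - Ev - Ew := by
    rw [ht1d]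
    linear_combination 2 * hDx - hDv - hDw
  have ht1b : |t1| * (n:ℝ)^2 ≤ 6 := by
    have habs : |t1 * (n:ℝ)^2| ≤ 6 := by
      rw [abs_le]
      constructor
      · rcases le_or_gt 0 t1 with h' | h'
        · have h0 := mul_nonneg h' (sq_nonneg (n:ℝ))
          linarith only [h0]
        · have h1 : -12 ≤ 2 * ((q - (n:ℝ) + 3) * (q - 1) - ((n:ℝ) - 3)) * t1 := by
            rw [hkey1]
            linarith only [hEx0', hEv6', hEw6']
          have h2 : 2 * (n:ℝ)^2 * (-t1)
              ≤ 2 * ((q - (n:ℝ) + 3) * (q - 1) - ((n:ℝ) - 3)) * (-t1) := by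
            apply mul_le_mul_of_nonneg_right _ (by linarith only [h'])
            linarith only [hD1]
          linarith only [h1, h2]
      · rcases le_or_gt t1 0 with h' | h'
        · have h0 := mul_nonpos_of_nonpos_of_nonneg h' (sq_nonneg (n:ℝ))
          linarith only [h0]
        · have h1 : 2 * ((q - (n:ℝ) + 3) * (q - 1) - ((n:ℝ) - 3)) * t1 ≤ 12 := by
            rw [hkey1]
            linarith only [hEx6', hEv0', hEw0']
          have h2 : 2 * (n:ℝ)^2 * t1
              ≤ 2 * ((q - (n:ℝ) + 3) * (q - 1) - ((n:ℝ) - 3)) * t1 := by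
            apply mul_le_mul_of_nonneg_right _ (le_of_lt h')
            linarith only [hD1]
          linarith only [h1, h2]
    rwa [abs_mul, abs_of_nonneg (sq_nonneg (n:ℝ))] at habs
  have hn2r : (n:ℝ)^2 * (1/(4*(n:ℝ))) = (n:ℝ)/4 := by
    field_simp
  have h2qP : 2*q*(t3 * (n:ℝ)^2) = -((n:ℝ)^2) * (1 + eps) + q*(n:ℝ)/2 := by
    rw [ht3d]
    linear_combination (n:ℝ)^2 * hsum + 2*q*hn2r
  have ht3b : |t3| * (n:ℝ)^2 ≤ 94 := by
    have hX : (n:ℝ)^2 * eps * (q-1) ≤ 24 * (n:ℝ)^2 := by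
      have h0 := mul_le_mul_of_nonneg_left heps24 (sq_nonneg (n:ℝ))
      linarith only [h0]
    have hX14 : (n:ℝ)^2 * eps ≤ 14 * (n:ℝ) := by
      by_contra hcX
      push_neg at hcX
      have h1 : 0 < ((n:ℝ)^2 * eps - 14*(n:ℝ)) * (q - 1) :=
        mul_pos (sub_pos.2 hcX) (by linarith only [hq55])
      have h2 : 14*(n:ℝ)*(2*(n:ℝ)-5) ≤ 14*(n:ℝ)*(q-1) :=
        mul_le_mul_of_nonneg_left (by linarith only [hqlow]) (by linarith only [hnR0])
      have h3 := mul_le_mul_of_nonneg_left hnR hnR0.le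
      linarith only [h1, h2, hX, h3, hnR0]
    have hup : 2*q*(t3 * (n:ℝ)^2) ≤ -(n:ℝ) := by
      have h1 : q*(n:ℝ) ≤ (2*(n:ℝ)-2)*(n:ℝ) :=
        mul_le_mul_of_nonneg_right hqhigh (by linarith only [hnR0])
      have h2 : 0 ≤ (n:ℝ)^2 * eps := mul_nonneg (sq_nonneg _) heps0'
      linarith only [h2qP, h1, h2]
    have hupper : t3 * (n:ℝ)^2 ≤ 0 := by
      by_contra hcu
      push_neg at hcu
      have hpos := mul_pos hq0 hcu
      linarith only [hup, hnR0, hpos]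
    have hlow : -(16*(n:ℝ)) ≤ 2*q*(t3*(n:ℝ)^2) := by
      have h1 : (2*(n:ℝ)-4)*(n:ℝ) ≤ q*(n:ℝ) :=
        mul_le_mul_of_nonneg_right hqlow (by linarith only [hnR0])
      linarith only [h2qP, hX14, h1]
    have hlower : -(94:ℝ) ≤ t3 * (n:ℝ)^2 := by
      by_contra hcl
      push_neg at hcl
      have h1 : 2*q*(t3*(n:ℝ)^2) < 2*q*(-94) :=
        mul_lt_mul_of_pos_left hcl (by linarith only [hq0])
      have h2 : 188*(n:ℝ) ≤ 188*q := by linarith only [hqlow, hnR]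
      linarith only [hlow, h1, h2, hnR]
    have habs3 : |t3 * (n:ℝ)^2| ≤ 94 :=
      abs_le.2 ⟨hlower, by linarith only [hupper]⟩
    rwa [abs_mul, abs_of_nonneg (sq_nonneg (n:ℝ))] at habs3
  rw [hsplit]
  calc |t1 + t3| * (n:ℝ)^2 ≤ (|t1| + |t3|) * (n:ℝ)^2 :=
        mul_le_mul_of_nonneg_right (abs_add_le t1 t3) (sq_nonneg _)
    _ = |t1| * (n:ℝ)^2 + |t3| * (n:ℝ)^2 := by ring
    _ ≤ 100 := by linarith only [ht1b, ht3b]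
end
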